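/- arXiv:1807.11189 — 3 statements merged into one kernel-verified Lean document; each statement's English description precedes it below -/
import Mathlib

section
/- The q-series identity \sum_{n\ge 0} q^{(n^2+n)/2}/(q;q)_n = 1/(q;q^2)_\infty holds as an identity of formal power series in q. -/
open PowerSeries Finset

namespace EulerQAux

noncomputable def P (n : ℕ) : PowerSeries ℚ := ∏ j ∈ range n, (1 - X ^ (j + 1))

lemma constP (n : ℕ) : constantCoeff (R := ℚ) (P n) = 1 := by
  simp [P, map_prod]

noncomputable def G (N m : ℕ) : PowerSeries ℚ :=
  ∑ n ∈ range (N + 1), X ^ ((n ^ 2 + n) / 2 + m * n) * (P n)⁻¹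

lemma tri_succ (n : ℕ) : ((n + 1) ^ 2 + (n + 1)) / 2 = (n ^ 2 + n) / 2 + (n + 1) := by
  have h : (n + 1) ^ 2 + (n + 1) = (n ^ 2 + n) + (n + 1) * 2 := by ring
  rw [h, Nat.add_mul_div_right _ _ (by norm_num : (0:ℕ) < 2)]

lemma exp_succ (n m : ℕ) :
    ((n + 1) ^ 2 + (n + 1)) / 2 + m * (n + 1) =
      ((n ^ 2 + n) / 2 + (m + 1) * n) + (m + 1) := by
  rw [tri_succ]; ring

lemma coeff_eq_of_dvd {N : ℕ} {f g : PowerSeries ℚ}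
    (h : (X : PowerSeries ℚ) ^ (N + 1) ∣ f - g) : coeff (R := ℚ) N f = coeff (R := ℚ) N g := by
  have := (X_pow_dvd_iff.mp h) N (lt_add_one N)
  rw [map_sub, sub_eq_zero] at this
  exact this

lemma dvd_pow_mul {N e : ℕ} (h : N + 1 ≤ e) (f : PowerSeries ℚ) :
    (X : PowerSeries ℚ) ^ (N + 1) ∣ X ^ e * f :=
  dvd_mul_of_dvd_left (pow_dvd_pow X h) f

lemma P_succ (n : ℕ) : P (n + 1) = P n * (1 - X ^ (n + 1)) := by
  simp [P, prod_range_succ]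

lemma factor_mul_inv (n : ℕ) :
    (1 - X ^ (n + 1)) * (P (n + 1))⁻¹ = (P n)⁻¹ := by
  rw [P_succ, PowerSeries.mul_inv_rev]
  rw [← mul_assoc, PowerSeries.mul_inv_cancel, one_mul]
  simp

/-- The key recurrence: `G N m = (1 + X^(m+1)) * G N (m+1) - (boundary term)`. -/
lemma G_rec (N m : ℕ) :
    (X : PowerSeries ℚ) ^ (N + 1) ∣ G N m - (1 + X ^ (m + 1)) * G N (m + 1) := by
  have hterm : ∀ n : ℕ,
      X ^ (((n+1) ^ 2 + (n+1)) / 2 + m * (n+1)) * (P (n+1))⁻¹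
        - X ^ (((n+1) ^ 2 + (n+1)) / 2 + (m + 1) * (n+1)) * (P (n+1))⁻¹
      = X ^ (m + 1) * (X ^ ((n ^ 2 + n) / 2 + (m + 1) * n) * (P n)⁻¹) := by
    intro n
    have pa : (X : PowerSeries ℚ) ^ (((n+1) ^ 2 + (n+1)) / 2 + (m + 1) * (n+1))
        = X ^ (((n+1) ^ 2 + (n+1)) / 2 + m * (n+1)) * X ^ (n+1) := by
      rw [← pow_add]; congr 1; ring
    rw [pa]
    have h2 : X ^ (((n+1) ^ 2 + (n+1)) / 2 + m * (n+1)) * (P (n+1))⁻¹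
        - X ^ (((n+1) ^ 2 + (n+1)) / 2 + m * (n+1)) * X ^ (n+1) * (P (n+1))⁻¹
      = X ^ (((n+1) ^ 2 + (n+1)) / 2 + m * (n+1)) * ((1 - X ^ (n+1)) * (P (n+1))⁻¹) := by
      ring
    have pb : (X : PowerSeries ℚ) ^ (((n ^ 2 + n) / 2 + (m + 1) * n) + (m + 1))
        = X ^ ((n ^ 2 + n) / 2 + (m + 1) * n) * X ^ (m + 1) := pow_add _ _ _
    rw [h2, factor_mul_inv, exp_succ, pb]
    ring
  have key : G N m - (1 + X ^ (m + 1)) * G N (m + 1) =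
      -(X ^ (m + 1) * (X ^ ((N ^ 2 + N) / 2 + (m + 1) * N) * (P N)⁻¹)) := by
    have e : G N m - (1 + X ^ (m+1)) * G N (m + 1)
        = (G N m - G N (m + 1)) - X ^ (m+1) * G N (m + 1) := by ring
    rw [e]
    have e2 : G N m - G N (m + 1)
        = ∑ n ∈ range N, X ^ (m + 1) * (X ^ ((n ^ 2 + n) / 2 + (m + 1) * n) * (P n)⁻¹) := by
      unfold G
      rw [← Finset.sum_sub_distrib, Finset.sum_range_succ']
      simp only [hterm]
      simp [P]
    rw [e2, ← Finset.mul_sum]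
    unfold G
    rw [Finset.sum_range_succ]
    ring
  rw [key, dvd_neg, ← mul_assoc, ← pow_add]
  apply dvd_pow_mul
  have h1 : N + 1 ≤ (m + 1) * (N + 1) := Nat.le_mul_of_pos_left _ (Nat.succ_pos m)
  have h2 : (m + 1) * (N + 1) = (m + 1) + (m + 1) * N := by ring
  omega

lemma G_prod (N : ℕ) : ∀ k m, (X : PowerSeries ℚ) ^ (N + 1) ∣
    G N m - (∏ j ∈ range k, (1 + X ^ (m + j + 1))) * G N (m + k) := by
  intro k
  induction k with
  | zero => intro m; simp
  | succ k ih =>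
    intro m
    have h1 := G_rec N m
    have h2 := ih (m + 1)
    have hprod : (∏ j ∈ range (k+1), (1 + (X:PowerSeries ℚ) ^ (m + j + 1)))
        = (1 + X ^ (m + 1)) * ∏ j ∈ range k, (1 + X ^ (m + 1 + j + 1)) := by
      rw [Finset.prod_range_succ']
      have h : ∀ j, m + (j + 1) + 1 = m + 1 + j + 1 := by intro j; ring
      simp only [h, Nat.add_zero]
      exact mul_comm _ _
    have key : G N m - (∏ j ∈ range (k+1), (1 + X ^ (m + j + 1))) * G N (m + (k+1))
        = (G N m - (1 + X ^ (m + 1)) * G N (m + 1))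
          + (1 + X ^ (m + 1)) *
            (G N (m + 1) - (∏ j ∈ range k, (1 + X ^ (m + 1 + j + 1))) * G N (m + 1 + k)) := by
      rw [hprod]
      have : m + (k + 1) = m + 1 + k := by ring
      rw [this]; ring
    rw [key]
    exact dvd_add h1 (Dvd.dvd.mul_left h2 _)

lemma G_top (N : ℕ) : (X : PowerSeries ℚ) ^ (N + 1) ∣ G N N - 1 := by
  unfold G
  rw [Finset.sum_range_succ']
  have h0 : (X : PowerSeries ℚ) ^ ((0 ^ 2 + 0) / 2 + N * 0) * (P 0)⁻¹ = 1 := by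
    simp [P]
  rw [h0, add_sub_cancel_right]
  apply Finset.dvd_sum
  intro n _
  apply dvd_pow_mul
  have h1 : 1 ≤ ((n+1) ^ 2 + (n+1)) / 2 := by
    have : 2 ≤ (n+1) ^ 2 + (n+1) := by nlinarith
    omega
  have h2 : N ≤ N * (n + 1) := Nat.le_mul_of_pos_right _ (Nat.succ_pos n)
  omega

lemma prod_plus_minus (n : ℕ) :
    (∏ j ∈ range n, (1 + (X:PowerSeries ℚ) ^ (j + 1))) *
      (∏ j ∈ range n, (1 - (X:PowerSeries ℚ) ^ (j + 1)))
    = ∏ j ∈ range n, (1 - (X:PowerSeries ℚ) ^ (2 * (j + 1))) := by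
  rw [← Finset.prod_mul_distrib]
  apply Finset.prod_congr rfl
  intro j _
  have : 2 * (j + 1) = (j + 1) + (j + 1) := by ring
  rw [this, pow_add]
  ring

lemma prod_even_odd (N : ℕ) :
    (∏ j ∈ range N, (1 - (X:PowerSeries ℚ) ^ (2 * (j + 1)))) *
      (∏ j ∈ range (N + 1), (1 - (X:PowerSeries ℚ) ^ (2 * j + 1)))
    = ∏ k ∈ range (2 * N + 1), (1 - (X:PowerSeries ℚ) ^ (k + 1)) := by
  induction N with
  | zero => simp
  | succ N ih =>
    have h1 : 2 * (N + 1) + 1 = (2 * N + 1) + 1 + 1 := by ring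
    rw [h1,
      prod_range_succ (fun k => (1 : PowerSeries ℚ) - X ^ (k + 1)) (2 * N + 1 + 1),
      prod_range_succ (fun k => (1 : PowerSeries ℚ) - X ^ (k + 1)) (2 * N + 1), ← ih,
      prod_range_succ (fun j => (1 : PowerSeries ℚ) - X ^ (2 * (j + 1))) N,
      prod_range_succ (fun j => (1 : PowerSeries ℚ) - X ^ (2 * j + 1)) (N + 1)]
    have e1 : 2 * (N + 1) = 2 * N + 1 + 1 := by ring
    rw [e1]
    ring

lemma prod_tail_one (N : ℕ) : ∀ k, (X : PowerSeries ℚ) ^ (N + 1) ∣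
    (∏ i ∈ range k, (1 - (X:PowerSeries ℚ) ^ (N + i + 1))) - 1 := by
  intro k
  induction k with
  | zero => simp
  | succ k ih =>
    rw [prod_range_succ]
    have key : (∏ i ∈ range k, (1 - (X:PowerSeries ℚ) ^ (N + i + 1))) *
          (1 - X ^ (N + k + 1)) - 1
        = ((∏ i ∈ range k, (1 - (X:PowerSeries ℚ) ^ (N + i + 1))) - 1) *
            (1 - X ^ (N + k + 1))
          - X ^ (N + k + 1) := by ring
    rw [key]
    apply dvd_sub (Dvd.dvd.mul_right ih _)
    exact pow_dvd_pow X (by omega)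

lemma QR_one (N : ℕ) :
    (X : PowerSeries ℚ) ^ (N + 1) ∣
      (∏ j ∈ range N, (1 + (X:PowerSeries ℚ) ^ (j + 1))) *
        (∏ j ∈ range (N + 1), (1 - (X:PowerSeries ℚ) ^ (2 * j + 1))) - 1 := by
  set Q := ∏ j ∈ range N, (1 + (X:PowerSeries ℚ) ^ (j + 1)) with hQ
  set D := ∏ j ∈ range N, (1 - (X:PowerSeries ℚ) ^ (j + 1)) with hD
  set R := ∏ j ∈ range (N + 1), (1 - (X:PowerSeries ℚ) ^ (2 * j + 1)) with hR
  have hbig : Q * D * R = ∏ k ∈ range (2 * N + 1), (1 - (X:PowerSeries ℚ) ^ (k + 1)) := by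
    rw [hQ, hD, hR, prod_plus_minus, prod_even_odd]
  have hsplit : (∏ k ∈ range (2 * N + 1), (1 - (X:PowerSeries ℚ) ^ (k + 1)))
      = D * ∏ i ∈ range (N + 1), (1 - (X:PowerSeries ℚ) ^ (N + i + 1)) := by
    have : 2 * N + 1 = N + (N + 1) := by ring
    rw [this, Finset.prod_range_add, hD]
  have hdvdD : (X : PowerSeries ℚ) ^ (N + 1) ∣ (Q * R - 1) * D := by
    have : (Q * R - 1) * D
        = D * ((∏ i ∈ range (N + 1), (1 - (X:PowerSeries ℚ) ^ (N + i + 1))) - 1) := by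
      have h2 : Q * R * D = D * ∏ i ∈ range (N + 1), (1 - (X:PowerSeries ℚ) ^ (N + i + 1)) := by
        rw [← hsplit, ← hbig]; ring
      calc (Q * R - 1) * D = Q * R * D - D := by ring
        _ = D * ((∏ i ∈ range (N + 1), (1 - (X:PowerSeries ℚ) ^ (N + i + 1))) - 1) := by
            rw [h2]; ring
    rw [this]
    exact Dvd.dvd.mul_left (prod_tail_one N (N + 1)) D
  have hDconst : constantCoeff (R := ℚ) D ≠ 0 := by
    rw [hD]; simp [map_prod]
  have : Q * R - 1 = ((Q * R - 1) * D) * D⁻¹ := by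
    rw [mul_assoc, PowerSeries.mul_inv_cancel D hDconst, mul_one]
  rw [this]
  exact Dvd.dvd.mul_right hdvdD _

end EulerQAux

open EulerQAux in
/-- Euler's `q`-series identity
`∑_{n≥0} q^{(n²+n)/2}/(q;q)_n = 1/(q;q²)_∞`
as formal power series in `q`, stated coefficient-wise: the `N`-th coefficient of the
(convergent) sum only receives contributions from `n ≤ N`, and the `N`-th coefficient
of the infinite product inverse only depends on the factors `1 - q^{2j+1}` with `j ≤ N`. -/
theorem euler_q_series (N : ℕ) :
    coeff (R := ℚ) N (∑ n ∈ range (N + 1),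
        X ^ ((n ^ 2 + n) / 2) * (∏ j ∈ range n, (1 - X ^ (j + 1) : PowerSeries ℚ))⁻¹) =
    coeff (R := ℚ) N ((∏ j ∈ range (N + 1), (1 - X ^ (2 * j + 1) : PowerSeries ℚ))⁻¹) := by
  set Q := ∏ j ∈ range N, (1 + (X:PowerSeries ℚ) ^ (j + 1)) with hQ
  set R := ∏ j ∈ range (N + 1), (1 - (X:PowerSeries ℚ) ^ (2 * j + 1)) with hR
  have hsum : (∑ n ∈ range (N + 1),
      X ^ ((n ^ 2 + n) / 2) * (∏ j ∈ range n, (1 - X ^ (j + 1) : PowerSeries ℚ))⁻¹)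
      = G N 0 := by
    unfold G P
    apply Finset.sum_congr rfl
    intro n _
    simp
  have hL : coeff (R := ℚ) N (G N 0) = coeff (R := ℚ) N Q := by
    apply coeff_eq_of_dvd
    have h1 := G_prod N N 0
    simp only [zero_add] at h1
    have h2 : (X : PowerSeries ℚ) ^ (N + 1) ∣
        (∏ j ∈ range N, (1 + (X:PowerSeries ℚ) ^ (0 + j + 1))) * G N N - Q := by
      have h3 : (∏ j ∈ range N, (1 + (X:PowerSeries ℚ) ^ (0 + j + 1))) * G N N - Q
          = (∏ j ∈ range N, (1 + (X:PowerSeries ℚ) ^ (j + 1))) * (G N N - 1) := by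
        rw [hQ]
        simp only [Nat.zero_add]
        ring
      rw [h3]
      exact Dvd.dvd.mul_left (G_top N) _
    have := dvd_add h1 h2
    simpa using this
  have hRconst : constantCoeff (R := ℚ) R ≠ 0 := by
    rw [hR]; simp [map_prod]
  have hRinv : coeff (R := ℚ) N R⁻¹ = coeff (R := ℚ) N Q := by
    apply coeff_eq_of_dvd
    have h := QR_one N
    rw [← hQ, ← hR] at h
    have key : R⁻¹ - Q = -((Q * R - 1) * R⁻¹) := by
      have : Q * R * R⁻¹ = Q := by
        rw [mul_assoc, PowerSeries.mul_inv_cancel R hRconst, mul_one]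
      calc R⁻¹ - Q = R⁻¹ - Q * R * R⁻¹ := by rw [this]
        _ = -((Q * R - 1) * R⁻¹) := by ring
    rw [key, dvd_neg]
    exact Dvd.dvd.mul_right h _
  rw [hsum, hL, hRinv]
end

section
/- Let cp_1(n,m) be the number of partitions of n into m parts, all parts at least 2, consecutive parts differing by at least 2, and differing by at least 4 unless their sum is a multiple of 3. Then \sum_{m,n\ge 0} cp_1(n,m) q^n x^m = \sum_{n_1,n_2\ge 0} q^{2n_1^2 + 6n_1 n_2 + 6n_2^2} x^{n_1+2n_2} / ((q;q)_{n_1} (q^3;q^3)_{n_2}). -/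
open PowerSeries Finset

namespace Capparelli


def cond (a b : ℕ) : Prop := a + 2 ≤ b ∧ ((a + b) % 3 = 0 ∨ a + 4 ≤ b)

def CapSet (c N M : ℕ) :=
  {l : List ℕ // l.length = M ∧ (∀ x ∈ l, c ≤ x) ∧ l.sum = N ∧ l.Chain' cond}

instance capFinite (c N M : ℕ) : Finite (CapSet c N M) := by
  have hb : ∀ l : CapSet c N M, ∀ x ∈ l.1, x < N + 1 := fun l x hx =>
    Nat.lt_succ_of_le (le_of_le_of_eq
      (List.single_le_sum (fun y _ => Nat.zero_le y) x hx) l.2.2.2.1)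
  apply Finite.of_injective (f := fun l : CapSet c N M =>
    (fun i : Fin M => (⟨l.1.get (Fin.cast l.2.1.symm i), hb l _ (l.1.get_mem _)⟩ : Fin (N+1))))
  intro l1 l2 h
  apply Subtype.ext
  apply List.ext_get (l1.2.1.trans l2.2.1.symm)
  intro n h1 h2
  have := congrFun h ⟨n, l1.2.1 ▸ h1⟩
  simpa [Fin.cast] using this

noncomputable def cap (c N M : ℕ) : ℕ := Nat.card (CapSet c N M)

theorem cap_M_zero (c N : ℕ) : cap c N 0 = if N = 0 then 1 else 0 := by
  split_ifs with h
  · subst h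
    have : Unique (CapSet c 0 0) := by
      refine ⟨⟨⟨[], rfl, by simp, rfl, List.isChain_nil⟩⟩, ?_⟩
      rintro ⟨l, hlen, -⟩
      apply Subtype.ext
      exact List.length_eq_zero_iff.mp hlen
    exact Nat.card_unique
  · have : IsEmpty (CapSet c N 0) := by
      constructor
      rintro ⟨l, hlen, -, hsum, -⟩
      rw [List.length_eq_zero_iff.mp hlen] at hsum
      exact h (hsum ▸ rfl)
    exact Nat.card_of_isEmpty

theorem cap_empty (c N M : ℕ) (h : N < c * M) : cap c N M = 0 := by
  have : IsEmpty (CapSet c N M) := by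
    constructor
    rintro ⟨l, hlen, hge, hsum, -⟩
    have := List.card_nsmul_le_sum l c hge
    rw [hsum, hlen, smul_eq_mul, mul_comm] at this
    omega
  exact Nat.card_of_isEmpty

theorem sum_map_add3 (l : List ℕ) : (l.map (· + 3)).sum = l.sum + 3 * l.length := by
  induction l with
  | nil => simp
  | cons a t ih => simp [ih]; omega

theorem cap_shift_add (c N M : ℕ) : cap (c + 3) (N + 3 * M) M = cap c N M := by
  symm
  apply Nat.card_eq_of_bijective (f := fun l : CapSet c N M =>
    (⟨l.1.map (· + 3), by
      obtain ⟨l, hlen, hge, hsum, hch⟩ := l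
      refine ⟨by simpa using hlen, ?_, ?_, ?_⟩
      · intro x hx
        obtain ⟨y, hy, rfl⟩ := List.mem_map.mp hx
        exact Nat.add_le_add_right (hge y hy) 3
      · show (List.map (· + 3) l).sum = N + 3 * M
        rw [sum_map_add3, hsum, hlen]
      · unfold List.Chain'; rw [List.isChain_map]
        apply hch.imp
        intro a b hab
        simp only [cond] at hab ⊢
        omega⟩ : CapSet (c+3) (N + 3*M) M))
  constructor
  · intro l1 l2 h
    apply Subtype.ext
    have := congrArg Subtype.val h
    exact List.map_injective_iff.mpr (fun a b => by omega) this
  · rintro ⟨l, hlen, hge, hsum, hch⟩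
    have hsub : ∀ x ∈ l, 3 ≤ x := fun x hx => le_trans (by omega) (hge x hx)
    have hmapid : (l.map (· - 3)).map (· + 3) = l := by
      rw [List.map_map]
      apply List.map_congr_left ?_ |>.trans l.map_id
      intro x hx
      have := hsub x hx
      simp; omega
    refine ⟨⟨l.map (· - 3), ?_, ?_, ?_, ?_⟩, ?_⟩
    · simpa using hlen
    · intro x hx
      obtain ⟨y, hy, rfl⟩ := List.mem_map.mp hx
      have := hge y hy; omega
    · have h2 := sum_map_add3 (l.map (· - 3))
      rw [hmapid] at h2
      simp only [List.length_map] at h2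
      omega
    · have hch2 : List.Chain' cond ((l.map (· - 3)).map (· + 3)) := by rw [hmapid]; exact hch
      unfold List.Chain' at hch2 ⊢; rw [List.isChain_map] at hch2
      apply hch2.imp
      intro a b hab
      simp only [cond] at hab ⊢
      omega
    · exact Subtype.ext hmapid


theorem cond_two (y : ℕ) : cond 2 y ↔ (y = 4 ∨ 6 ≤ y) := by unfold cond; omega
theorem cond_three (y : ℕ) : cond 3 y ↔ 6 ≤ y := by unfold cond; omega
theorem cond_four (y : ℕ) : cond 4 y ↔ 8 ≤ y := by unfold cond; omega

theorem head_le_mem {l : List ℕ} (hch : l.Chain' cond) {y : ℕ} (hy : l.head? = some y) :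
    ∀ x ∈ l, y ≤ x := by
  have hle : l.Chain' (· ≤ ·) := hch.imp (fun a b hab => by have := hab.1; omega)
  unfold List.Chain' at hle; rw [List.isChain_iff_pairwise] at hle
  cases l with
  | nil => simp at hy
  | cons a t =>
    simp only [List.head?_cons, Option.some_inj] at hy
    subst hy
    intro x hx
    rcases List.mem_cons.mp hx with rfl | hx
    · exact le_refl x
    · exact (List.pairwise_cons.mp hle).1 x hx

theorem ge_of_head_ge {l : List ℕ} (hch : l.Chain' cond) {d : ℕ}
    (hd : ∀ y ∈ l.head?, d ≤ y) : ∀ x ∈ l, d ≤ x := by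
  intro x hx
  cases l with
  | nil => simp at hx
  | cons a t =>
    exact le_trans (hd a rfl) (head_le_mem hch rfl x hx)

theorem cap_head_split (c N M : ℕ) :
    cap c N M = cap (c+1) N M + Nat.card {l : CapSet c N M // l.1.head? = some c} := by
  classical
  have key : ∀ (l : List ℕ), l.Chain' cond → (∀ x ∈ l, c ≤ x) → ¬ l.head? = some c →
      ∀ x ∈ l, c + 1 ≤ x := by
    intro l hch hge hne x hx
    cases l with
    | nil => simp at hx
    | cons a t =>
      have hxa : a ≤ x := head_le_mem hch rfl x hx
      have hca : c ≤ a := hge a List.mem_cons_self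
      have hac : a ≠ c := fun h => hne (by rw [List.head?_cons, h])
      omega
  have e1 : {l : CapSet c N M // ¬ l.1.head? = some c} ≃ CapSet (c+1) N M :=
    { toFun := fun l => ⟨l.1.1, l.1.2.1, key l.1.1 l.1.2.2.2.2 l.1.2.2.1 l.2, l.1.2.2.2.1,
        l.1.2.2.2.2⟩
      invFun := fun l => ⟨⟨l.1, l.2.1, fun x hx => le_trans (Nat.le_succ c) (l.2.2.1 x hx),
          l.2.2.2⟩,
        fun h => absurd (l.2.2.1 c (List.mem_of_mem_head? h)) (by omega)⟩
      left_inv := fun l => Subtype.ext (Subtype.ext rfl)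
      right_inv := fun l => rfl }
  calc cap c N M
      = Nat.card ({l : CapSet c N M // l.1.head? = some c} ⊕
          {l : CapSet c N M // ¬ l.1.head? = some c}) :=
        (Nat.card_congr (Equiv.sumCompl _)).symm
    _ = Nat.card {l : CapSet c N M // l.1.head? = some c}
          + Nat.card {l : CapSet c N M // ¬ l.1.head? = some c} := Nat.card_sum
    _ = cap (c+1) N M + Nat.card {l : CapSet c N M // l.1.head? = some c} := by
        rw [Nat.card_congr e1, cap]; omega

theorem head_empty (c h N M : ℕ) (Φ : Option ℕ → Prop) (hc : N < h ∨ M = 0) :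
    Nat.card {l : CapSet c N M // l.1.head? = some h ∧ Φ l.1.tail.head?} = 0 := by
  have : IsEmpty {l : CapSet c N M // l.1.head? = some h ∧ Φ l.1.tail.head?} := by
    constructor
    rintro ⟨⟨l, hlen, hge, hsum, hch⟩, hhead, -⟩
    cases l with
    | nil => simp at hhead
    | cons a t =>
      simp only [List.head?_cons, Option.some_inj] at hhead
      subst hhead
      simp only [List.sum_cons, List.length_cons] at hsum hlen
      omega
  exact Nat.card_of_isEmpty

theorem cons_card (c h d N M : ℕ) (Φ : Option ℕ → Prop)
    (hch : c ≤ h) (hcd : c ≤ d)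
    (Hfwd : ∀ y, d ≤ y → cond h y)
    (HΦ : ∀ y, d ≤ y → Φ (some y)) (HΦnil : Φ none)
    (Hbwd : ∀ y, cond h y → Φ (some y) → d ≤ y) :
    Nat.card {l : CapSet c (N + h) (M + 1) // l.1.head? = some h ∧ Φ l.1.tail.head?}
      = cap d N M := by
  symm
  apply Nat.card_eq_of_bijective (f := fun t : CapSet d N M =>
    (⟨⟨h :: t.1, by simp [t.2.1], by
        intro x hx
        rcases List.mem_cons.mp hx with rfl | hx
        · exact hch
        · exact le_trans hcd (t.2.2.1 x hx), by
        simp only [List.sum_cons]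
        rw [t.2.2.2.1]; omega, by
        unfold List.Chain'; rw [List.isChain_cons]
        exact ⟨fun y hy => Hfwd y (t.2.2.1 y (List.mem_of_mem_head? hy)), t.2.2.2.2⟩⟩, by
      refine ⟨rfl, ?_⟩
      show Φ t.1.head?
      cases ht : t.1 with
      | nil => exact HΦnil
      | cons a r => exact HΦ a (t.2.2.1 a (by rw [ht]; exact List.mem_cons_self))⟩ :
      {l : CapSet c (N + h) (M + 1) // l.1.head? = some h ∧ Φ l.1.tail.head?}))
  constructor
  · intro t1 t2 hteq
    have := congrArg (fun z => z.1.1) hteq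
    simp only [List.cons.injEq] at this
    exact Subtype.ext this.2
  · rintro ⟨⟨l, hlen, hge, hsum, hchl⟩, hhead, hΦ⟩
    cases l with
    | nil => simp at hhead
    | cons a t =>
      simp only [List.head?_cons, Option.some_inj] at hhead
      subst hhead
      have hcht : t.Chain' cond := (List.isChain_cons.mp hchl).2
      have hhdt : ∀ y ∈ t.head?, d ≤ y := by
        intro y hy
        refine Hbwd y ((List.isChain_cons.mp hchl).1 y hy) ?_
        have hΦ' : Φ t.head? := hΦ
        rw [show t.head? = some y from hy] at hΦ'
        exact hΦ' 
      have hget : ∀ x ∈ t, d ≤ x := ge_of_head_ge hcht hhdt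
      simp only [List.sum_cons, List.length_cons] at hsum hlen
      refine ⟨⟨t, by omega, hget, by omega, hcht⟩, ?_⟩
      apply Subtype.ext
      rfl

theorem cons_fix (c h k N M : ℕ) (hch : c ≤ h) (hcond : cond h k) :
    Nat.card {l : CapSet c (N + h) (M + 1) // l.1.head? = some h ∧ l.1.tail.head? = some k}
      = Nat.card {t : CapSet k N M // t.1.head? = some k} := by
  symm
  apply Nat.card_eq_of_bijective (f := fun t : {t : CapSet k N M // t.1.head? = some k} =>
    (⟨⟨h :: t.1.1, by simp [t.1.2.1], by
        intro x hx
        rcases List.mem_cons.mp hx with rfl | hx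
        · exact hch
        · exact le_trans (le_trans (by have := hcond.1; omega) (le_refl k))
            (t.1.2.2.1 x hx), by
        simp only [List.sum_cons]
        rw [t.1.2.2.2.1]; omega, by
        unfold List.Chain'; rw [List.isChain_cons]
        refine ⟨fun y hy => ?_, t.1.2.2.2.2⟩
        rw [t.2] at hy
        cases hy
        exact hcond⟩, rfl, t.2⟩ :
      {l : CapSet c (N + h) (M + 1) // l.1.head? = some h ∧ l.1.tail.head? = some k}))
  constructor
  · intro t1 t2 hteq
    have := congrArg (fun z => z.1.1) hteq
    simp only [List.cons.injEq] at this
    exact Subtype.ext (Subtype.ext this.2)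
  · rintro ⟨⟨l, hlen, hge, hsum, hch2⟩, hhead, htail⟩
    cases l with
    | nil => simp at hhead
    | cons a t =>
      simp only [List.head?_cons, Option.some_inj] at hhead
      subst hhead
      have hcht : t.Chain' cond := (List.isChain_cons.mp hch2).2
      have htl : t.head? = some k := htail
      have hget : ∀ x ∈ t, k ≤ x := head_le_mem hcht htl
      simp only [List.sum_cons, List.length_cons] at hsum hlen
      refine ⟨⟨⟨t, by omega, hget, by omega, hcht⟩, htl⟩, ?_⟩
      apply Subtype.ext
      rfl


theorem cap_shift (c N M : ℕ) :
    cap (c + 3) N M = if 3 * M ≤ N then cap c (N - 3 * M) M else 0 := by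
  split_ifs with h
  · conv_lhs => rw [show N = (N - 3*M) + 3*M from by omega]
    exact cap_shift_add c (N - 3*M) M
  · apply cap_empty
    have h3 : 3 * M ≤ (c + 3) * M := by nlinarith
    omega

theorem trueEquiv (c h N M : ℕ) :
    Nat.card {l : CapSet c N M // l.1.head? = some h}
      = Nat.card {l : CapSet c N M // l.1.head? = some h ∧
          (fun _ : Option ℕ => True) l.1.tail.head?} :=
  Nat.card_congr (Equiv.subtypeEquivRight (by simp))

theorem cap_split3 (N M : ℕ) :
    cap 3 N M = cap 4 N M + (if 3 ≤ N ∧ 1 ≤ M then cap 6 (N - 3) (M - 1) else 0) := by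
  rw [cap_head_split 3 N M, trueEquiv]
  congr 1
  split_ifs with h
  · obtain ⟨N', rfl⟩ : ∃ N', N = N' + 3 := ⟨N - 3, by omega⟩
    obtain ⟨M', rfl⟩ : ∃ M', M = M' + 1 := ⟨M - 1, by omega⟩
    simp only [Nat.add_sub_cancel]
    exact cons_card 3 3 6 N' M' (fun _ => True) le_rfl (by omega)
      (fun y hy => (cond_three y).mpr hy) (fun y _ => trivial) trivial
      (fun y hy _ => (cond_three y).mp hy)
  · exact head_empty 3 3 N M (fun _ => True) (by omega)

theorem cap_split4 (N M : ℕ) :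
    cap 4 N M = cap 5 N M + (if 4 ≤ N ∧ 1 ≤ M then cap 8 (N - 4) (M - 1) else 0) := by
  rw [cap_head_split 4 N M, trueEquiv]
  congr 1
  split_ifs with h
  · obtain ⟨N', rfl⟩ : ∃ N', N = N' + 4 := ⟨N - 4, by omega⟩
    obtain ⟨M', rfl⟩ : ∃ M', M = M' + 1 := ⟨M - 1, by omega⟩
    simp only [Nat.add_sub_cancel]
    exact cons_card 4 4 8 N' M' (fun _ => True) le_rfl (by omega)
      (fun y hy => (cond_four y).mpr hy) (fun y _ => trivial) trivial
      (fun y hy _ => (cond_four y).mp hy)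
  · exact head_empty 4 4 N M (fun _ => True) (by omega)

theorem head2_empty (N M : ℕ) (h : N < 6 ∨ M < 2) :
    Nat.card {l : CapSet 2 N M // l.1.head? = some 2 ∧ l.1.tail.head? = some 4} = 0 := by
  have : IsEmpty {l : CapSet 2 N M // l.1.head? = some 2 ∧ l.1.tail.head? = some 4} := by
    constructor
    rintro ⟨⟨l, hlen, hge, hsum, hchx⟩, hhead, htail⟩
    cases l with
    | nil => simp at hhead
    | cons a t =>
      simp only [List.head?_cons, Option.some_inj] at hhead
      subst hhead
      cases t with
      | nil => simp [List.tail] at htail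
      | cons b r =>
        have hb : b = 4 := by
          simpa [List.tail] using htail
        simp only [List.sum_cons, List.length_cons] at hsum hlen
        omega
  exact Nat.card_of_isEmpty

theorem cap_split2 (N M : ℕ) :
    cap 2 N M = cap 3 N M + (if 2 ≤ N ∧ 1 ≤ M then cap 6 (N - 2) (M - 1) else 0) +
      (if 6 ≤ N ∧ 2 ≤ M then cap 8 (N - 6) (M - 2) else 0) := by
  classical
  rw [cap_head_split 2 N M]
  have hsplit : Nat.card {l : CapSet 2 N M // l.1.head? = some 2}
      = Nat.card {l : CapSet 2 N M // l.1.head? = some 2 ∧ l.1.tail.head? = some 4}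
        + Nat.card {l : CapSet 2 N M // l.1.head? = some 2 ∧ ¬ l.1.tail.head? = some 4} := by
    rw [← Nat.card_congr (Equiv.subtypeSubtypeEquivSubtypeInter
        (fun l : CapSet 2 N M => l.1.head? = some 2) (fun l => l.1.tail.head? = some 4)),
      ← Nat.card_congr (Equiv.subtypeSubtypeEquivSubtypeInter
        (fun l : CapSet 2 N M => l.1.head? = some 2) (fun l => ¬ l.1.tail.head? = some 4)),
      ← Nat.card_sum]
    exact Nat.card_congr (Equiv.sumCompl fun x :
      {l : CapSet 2 N M // l.1.head? = some 2} => x.1.1.tail.head? = some 4).symm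
  rw [hsplit]
  have hB : Nat.card {l : CapSet 2 N M // l.1.head? = some 2 ∧ ¬ l.1.tail.head? = some 4}
      = (if 2 ≤ N ∧ 1 ≤ M then cap 6 (N - 2) (M - 1) else 0) := by
    split_ifs with h
    · obtain ⟨N', rfl⟩ : ∃ N', N = N' + 2 := ⟨N - 2, by omega⟩
      obtain ⟨M', rfl⟩ : ∃ M', M = M' + 1 := ⟨M - 1, by omega⟩
      simp only [Nat.add_sub_cancel]
      exact cons_card 2 2 6 N' M' (fun o => ¬ o = some 4) le_rfl (by omega)
        (fun y hy => (cond_two y).mpr (Or.inr hy))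
        (fun y hy => by simp; omega) (by simp)
        (fun y hy hΦ => by
          rcases (cond_two y).mp hy with h4 | h6
          · exact absurd (by rw [h4]) hΦ
          · exact h6)
    · exact head_empty 2 2 N M (fun o => ¬ o = some 4) (by omega)
  have hA : Nat.card {l : CapSet 2 N M // l.1.head? = some 2 ∧ l.1.tail.head? = some 4}
      = (if 6 ≤ N ∧ 2 ≤ M then cap 8 (N - 6) (M - 2) else 0) := by
    split_ifs with h
    · obtain ⟨N', rfl⟩ : ∃ N', N = (N' + 4) + 2 := ⟨N - 6, by omega⟩
      obtain ⟨M', rfl⟩ : ∃ M', M = (M' + 1) + 1 := ⟨M - 2, by omega⟩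
      rw [cons_fix 2 2 4 (N' + 4) (M' + 1) le_rfl (by unfold cond; omega), trueEquiv]
      have e1 : N' + 4 + 2 - 6 = N' := by omega
      have e2 : M' + 1 + 1 - 2 = M' := by omega
      rw [e1, e2]
      exact cons_card 4 4 8 N' M' (fun _ => True) le_rfl (by omega)
        (fun y hy => (cond_four y).mpr hy) (fun y _ => trivial) trivial
        (fun y hy _ => (cond_four y).mp hy)
    · exact head2_empty N M (by omega)
  rw [hA, hB]
  simp only [show (2:ℕ)+1 = 3 from rfl]
  omega

noncomputable def trm (u v N a b : ℕ) : ℚ :=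
  coeff N (X ^ (2 * a ^ 2 + 6 * a * b + 6 * b ^ 2 + u * a + v * b) *
    (∏ j ∈ range a, (1 - X ^ (j + 1) : PowerSeries ℚ))⁻¹ *
    (∏ j ∈ range b, (1 - X ^ (3 * (j + 1)) : PowerSeries ℚ))⁻¹)

noncomputable def t (u v N M : ℕ) : ℚ :=
  ∑ p ∈ (range (N + 1) ×ˢ range (N + 1)).filter (fun p => p.1 + 2 * p.2 = M),
    trm u v N p.1 p.2

theorem cancel (k : ℕ) :
    (1 - X ^ (k+1) : PowerSeries ℚ) * (1 - X ^ (k+1))⁻¹ = 1 :=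
  PowerSeries.mul_inv_cancel _ (by simp)

theorem prod_succ_inv (a : ℕ) :
    (1 - X ^ (a+1) : PowerSeries ℚ) * (∏ j ∈ range (a+1), (1 - X ^ (j + 1) : PowerSeries ℚ))⁻¹
      = (∏ j ∈ range a, (1 - X ^ (j + 1) : PowerSeries ℚ))⁻¹ := by
  rw [prod_range_succ, PowerSeries.mul_inv_rev, ← mul_assoc, cancel, one_mul]

theorem prod3_succ_inv (b : ℕ) :
    (1 - X ^ (3*(b+1)) : PowerSeries ℚ) * (∏ j ∈ range (b+1), (1 - X ^ (3*(j + 1)) : PowerSeries ℚ))⁻¹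
      = (∏ j ∈ range b, (1 - X ^ (3*(j + 1)) : PowerSeries ℚ))⁻¹ := by
  have h3 : 3*(b+1) = (3*b+2)+1 := by ring
  rw [prod_range_succ, PowerSeries.mul_inv_rev, ← mul_assoc, h3, cancel, one_mul]

theorem coeff_shift (s e N : ℕ) (f : PowerSeries ℚ) (h : s ≤ N) :
    coeff N (X ^ (e + s) * f) = coeff (N - s) (X ^ e * f) := by
  rw [add_comm e s, pow_add, mul_assoc, PowerSeries.coeff_X_pow_mul', if_pos h]

theorem diff_lemma (e k : ℕ) (W g : PowerSeries ℚ) :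
    X ^ e * W * g - X ^ (e + k) * W * g = X ^ e * ((1 - X ^ k) * W) * g := by
  rw [pow_add]; ring

theorem step_a (u v N a b : ℕ) (h : u + 2 ≤ N) :
    trm u v N (a+1) b = trm (u+1) v N (a+1) b + trm (u+4) (v+6) (N - (u+2)) a b := by
  have key : trm u v N (a+1) b - trm (u+1) v N (a+1) b
      = trm (u+4) (v+6) (N - (u+2)) a b := by
    rw [trm, trm, trm, ← map_sub]
    rw [show 2*(a+1)^2 + 6*(a+1)*b + 6*b^2 + (u+1)*(a+1) + v*b
        = (2*(a+1)^2 + 6*(a+1)*b + 6*b^2 + u*(a+1) + v*b) + (a+1) from by ring]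
    rw [diff_lemma, prod_succ_inv]
    rw [show 2*(a+1)^2 + 6*(a+1)*b + 6*b^2 + u*(a+1) + v*b
        = (2*a^2 + 6*a*b + 6*b^2 + (u+4)*a + (v+6)*b) + (u+2) from by ring]
    rw [mul_assoc, coeff_shift _ _ _ _ h, ← mul_assoc]
  linarith [key]

theorem step_b (u v N a b : ℕ) (h : v + 6 ≤ N) :
    trm u v N a (b+1) = trm u (v+3) N a (b+1) + trm (u+6) (v+12) (N - (v+6)) a b := by
  have key : trm u v N a (b+1) - trm u (v+3) N a (b+1)
      = trm (u+6) (v+12) (N - (v+6)) a b := by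
    rw [trm, trm, trm, ← map_sub]
    rw [show 2*a^2 + 6*a*(b+1) + 6*(b+1)^2 + u*a + (v+3)*(b+1)
        = (2*a^2 + 6*a*(b+1) + 6*(b+1)^2 + u*a + v*(b+1)) + (3*(b+1)) from by ring]
    have hcomm : ∀ f g h : PowerSeries ℚ, ∀ e : ℕ,
        X ^ e * f⁻¹ * g - X ^ (e + 3*(b+1)) * f⁻¹ * g = X ^ e * f⁻¹ * ((1 - X ^ (3*(b+1))) * g) := by
      intro f g h e; rw [pow_add]; ring
    rw [hcomm _ _ 1, prod3_succ_inv]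
    rw [show 2*a^2 + 6*a*(b+1) + 6*(b+1)^2 + u*a + v*(b+1)
        = (2*a^2 + 6*a*b + 6*b^2 + (u+6)*a + (v+12)*b) + (v+6) from by ring]
    rw [mul_assoc, mul_assoc, coeff_shift _ _ _ _ h, ← mul_assoc, ← mul_assoc]
  linarith [key]

theorem coeff_big (e N : ℕ) (f : PowerSeries ℚ) (h : N < e) :
    coeff N (X ^ e * f) = 0 := by
  rw [PowerSeries.coeff_X_pow_mul', if_neg (by omega)]

theorem trm_eq_zero (u v N a b : ℕ) (h : N < 2 * a ^ 2 + 6 * a * b + 6 * b ^ 2 + u * a + v * b) :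
    trm u v N a b = 0 := by
  rw [trm, mul_assoc, coeff_big _ _ _ h]

theorem trm_vanish (u v N a b : ℕ) (h : N < a ∨ N < b) : trm u v N a b = 0 := by
  apply trm_eq_zero
  rcases h with h | h
  · nlinarith
  · nlinarith

theorem t_alt (u v N M K : ℕ) (hK : N ≤ K) :
    t u v N M = ∑ b ∈ range (K+1), if 2*b ≤ M then trm u v N (M - 2*b) b else 0 := by
  have h1 : ∀ L : ℕ, N ≤ L →
      (∑ b ∈ range (L+1), if 2*b ≤ M then trm u v N (M - 2*b) b else 0)
        = ∑ b ∈ range (N+1), if 2*b ≤ M ∧ M - 2*b ≤ N then trm u v N (M - 2*b) b else 0 := by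
    intro L hL
    rw [← Finset.sum_subset (Finset.range_subset_range.2 (by omega) : range (N+1) ⊆ range (L+1))]
    · apply Finset.sum_congr rfl
      intro b hb
      split_ifs with hc1 hc2 hc3
      · rfl
      · exact trm_vanish u v N (M - 2*b) b (Or.inl (by omega))
      · omega
      · rfl
    · intro b hbL hbN
      simp only [mem_range] at hbL hbN
      split_ifs with h
      · exact trm_vanish u v N (M - 2*b) b (Or.inr (by omega))
      · rfl
  rw [h1 K hK]
  rw [t, ← Finset.sum_filter]
  apply Finset.sum_nbij' (i := fun p => p.2) (j := fun b => (M - 2*b, b))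
  · intro p hp
    simp only [mem_filter, mem_product, mem_range] at hp ⊢
    omega
  · intro b hb
    simp only [mem_filter, mem_product, mem_range] at hb ⊢
    omega
  · intro p hp
    simp only [mem_filter, mem_product, mem_range] at hp
    ext <;> simp <;> omega
  · intro b hb
    rfl
  · intro p hp
    simp only [mem_filter, mem_product, mem_range] at hp
    have : M - 2 * p.2 = p.1 := by omega
    rw [this]

theorem trm_u_irrel (u u' v N b : ℕ) : trm u v N 0 b = trm u' v N 0 b := by
  simp [trm]

theorem trm_v_irrel (u v v' N a : ℕ) : trm u v N a 0 = trm u v' N a 0 := by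
  simp [trm]

theorem t_zero (u v N : ℕ) : t u v N 0 = if N = 0 then 1 else 0 := by
  rw [t_alt u v N 0 N le_rfl]
  rw [Finset.sum_eq_single 0]
  · simp [trm, PowerSeries.coeff_one]
  · intro b _ hb
    rw [if_neg (by omega)]
  · intro h
    simp at h
theorem t_N_zero (u v M : ℕ) (hM : 1 ≤ M) : t u v 0 M = 0 := by
  rw [t_alt u v 0 M 0 le_rfl]
  rw [Finset.sum_eq_single 0]
  · rw [if_pos (by omega)]
    apply trm_eq_zero
    have : 1 ≤ M - 2*0 := by omega
    nlinarith
  · intro b _ hb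
    have : ¬ (2*b ≤ M) ∨ True := by tauto
    split_ifs with h
    · apply trm_vanish
      right; omega
    · rfl
  · intro h; simp at h

theorem tA (u v N M : ℕ) :
    t u v N M = t (u + 1) v N M +
      (if 1 ≤ M ∧ u + 2 ≤ N then t (u + 4) (v + 6) (N - (u + 2)) (M - 1) else 0) := by
  by_cases hg : 1 ≤ M ∧ u + 2 ≤ N
  · rw [if_pos hg]
    rw [t_alt u v N M N le_rfl, t_alt (u+1) v N M N le_rfl,
      t_alt (u+4) (v+6) (N - (u+2)) (M-1) N (by omega), ← Finset.sum_add_distrib]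
    apply Finset.sum_congr rfl
    intro b _
    split_ifs with h1 h2 h3
    · -- 2b ≤ M and 2b ≤ M - 1
      have ha : M - 2*b = (M - 1 - 2*b) + 1 := by omega
      rw [ha]
      exact step_a u v N (M - 1 - 2*b) b hg.2
    · -- 2b ≤ M, ¬ 2b ≤ M-1 : so 2b = M, a = 0
      have ha : M - 2*b = 0 := by omega
      rw [ha, add_zero]
      exact trm_u_irrel _ _ _ _ _
    · omega
    · rw [add_zero]
  · rw [if_neg hg, add_zero]
    rw [t_alt u v N M N le_rfl, t_alt (u+1) v N M N le_rfl]
    apply Finset.sum_congr rfl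
    intro b _
    split_ifs with h1
    · rcases Nat.eq_zero_or_pos (M - 2*b) with ha | ha
      · rw [ha]; exact trm_u_irrel _ _ _ _ _
      · rcases Nat.lt_or_ge N (u+2) with hN | hN
        · rw [trm_eq_zero u v N _ b (by nlinarith), trm_eq_zero (u+1) v N _ b (by nlinarith)]
        · have hM : M = 0 := by omega
          omega
    · rfl

theorem tB (u v N M : ℕ) :
    t u v N M = t u (v + 3) N M +
      (if 2 ≤ M ∧ v + 6 ≤ N then t (u + 6) (v + 12) (N - (v + 6)) (M - 2) else 0) := by
  by_cases hg : 2 ≤ M ∧ v + 6 ≤ N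
  · rw [if_pos hg]
    rw [t_alt u v N M (N+1) (by omega), t_alt u (v+3) N M (N+1) (by omega),
      t_alt (u+6) (v+12) (N - (v+6)) (M-2) N (by omega)]
    rw [Finset.sum_range_succ' (fun b => if 2*b ≤ M then trm u v N (M - 2*b) b else 0) (N+1),
      Finset.sum_range_succ' (fun b => if 2*b ≤ M then trm u (v+3) N (M - 2*b) b else 0) (N+1)]
    simp only [Nat.mul_zero, Nat.sub_zero]
    rw [if_pos (by omega : 2*0 ≤ M), if_pos (by omega : 2*0 ≤ M)]
    rw [trm_v_irrel u v (v+3) N M]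
    rw [add_right_comm]
    congr 1
    rw [← Finset.sum_add_distrib]
    apply Finset.sum_congr rfl
    intro b _
    split_ifs with h1 h2 h3
    · have ha : M - 2*(b+1) = M - 2 - 2*b := by omega
      rw [ha]
      exact step_b u v N (M - 2 - 2*b) b hg.2
    · omega
    · omega
    · rw [add_zero]
  · rw [if_neg hg, add_zero]
    rw [t_alt u v N M N le_rfl, t_alt u (v+3) N M N le_rfl]
    apply Finset.sum_congr rfl
    intro b _
    split_ifs with h1
    · rcases Nat.eq_zero_or_pos b with hb | hb
      · subst hb
        exact trm_v_irrel _ _ _ _ _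
      · rcases Nat.lt_or_ge N (v+6) with hN | hN
        · rw [trm_eq_zero u v N _ b (by nlinarith), trm_eq_zero u (v+3) N _ b (by nlinarith)]
        · omega
    · rfl

theorem t_shift (u v N M : ℕ) :
    t (u + 3) (v + 6) N M = if 3 * M ≤ N then t u v (N - 3 * M) M else 0 := by
  by_cases hg : 3 * M ≤ N
  · rw [if_pos hg, t_alt (u+3) (v+6) N M N le_rfl, t_alt u v (N - 3*M) M N (by omega)]
    apply Finset.sum_congr rfl
    intro b _
    split_ifs with h1
    · obtain ⟨a, ha⟩ : ∃ a, M = a + 2*b := ⟨M - 2*b, by omega⟩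
      have ha2 : M - 2*b = a := by omega
      rw [ha2]
      rw [trm, trm]
      rw [show 2*a^2 + 6*a*b + 6*b^2 + (u+3)*a + (v+6)*b
          = (2*a^2 + 6*a*b + 6*b^2 + u*a + v*b) + 3*(a + 2*b) from by ring, ← ha]
      rw [mul_assoc, coeff_shift _ _ _ _ hg, ← mul_assoc]
    · rfl
  · rw [if_neg hg, t_alt (u+3) (v+6) N M N le_rfl]
    apply Finset.sum_eq_zero
    intro b _
    split_ifs with h1
    · apply trm_eq_zero
      have h2 : 3 * ((M - 2*b) + 2*b) = 3 * M := by omega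
      nlinarith
    · rfl


theorem main (N : ℕ) : ∀ M : ℕ,
    ((cap 2 N M : ℚ) = t 0 0 N M ∧ (cap 3 N M : ℚ) = t 1 3 N M ∧
      (cap 4 N M : ℚ) = t 2 6 N M) := by
  induction N using Nat.strong_induction_on with
  | _ N ih =>
  intro M
  rcases Nat.eq_zero_or_pos M with rfl | hM
  · refine ⟨?_, ?_, ?_⟩ <;>
      (rw [cap_M_zero, t_zero]; split_ifs <;> simp)
  -- M ≥ 1 henceforth
  have key8 : ∀ X K, X < N → (cap 8 X K : ℚ) = t 6 12 X K := by
    intro X K hX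
    have c1 := cap_shift 5 X K; norm_num at c1
    have c2 := cap_shift 2 (X - 3*K) K; norm_num at c2
    have t1 := t_shift 3 6 X K; norm_num at t1
    have t2 := t_shift 0 0 (X - 3*K) K; norm_num at t2
    rw [c1, t1]
    split_ifs with hg
    · rw [c2, t2]
      split_ifs with hg2
      · exact (ih _ (by omega) K).1
      · simp
    · simp
  have key6 : ∀ X K, X < N → (cap 6 X K : ℚ) = t 4 9 X K := by
    intro X K hX
    have c1 := cap_shift 3 X K; norm_num at c1
    have t1 := t_shift 1 3 X K; norm_num at t1
    rw [c1, t1]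
    split_ifs with hg
    · exact (ih _ (by omega) K).2.1
    · simp
  have h4 : (cap 4 N M : ℚ) = t 2 6 N M := by
    have c1 := cap_split4 N M
    have c2 := cap_shift 2 N M; norm_num at c2
    have t3 := tA 2 6 N M; norm_num at t3
    have t4 := t_shift 0 0 N M; norm_num at t4
    rw [c1, c2, t3, t4, Nat.cast_add]
    have part1 : ((if 3*M ≤ N then cap 2 (N - 3*M) M else 0 : ℕ) : ℚ)
        = (if 3*M ≤ N then t 0 0 (N - 3*M) M else 0) := by
      split_ifs with h
      · exact (ih (N - 3*M) (by omega) M).1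
      · simp
    have part2 : ((if 4 ≤ N ∧ 1 ≤ M then cap 8 (N-4) (M-1) else 0 : ℕ) : ℚ)
        = (if 1 ≤ M ∧ 4 ≤ N then t 6 12 (N-4) (M-1) else 0) := by
      split_ifs with g1 g2 g3
      · exact key8 (N-4) (M-1) (by omega)
      · omega
      · omega
      · simp
    rw [part1, part2]
  have h3 : (cap 3 N M : ℚ) = t 1 3 N M := by
    have c1 := cap_split3 N M
    have t5 := tA 1 3 N M; norm_num at t5
    have t6 := tB 2 3 N M; norm_num at t6
    have t7 := tA 4 9 (N-3) (M-1); norm_num at t7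
    have e1 : N - 3 - 6 = N - 9 := by omega
    have e2 : M - 1 - 1 = M - 2 := by omega
    rw [e1, e2] at t7
    rw [c1, Nat.cast_add, h4, t5, t6]
    have part : ((if 3 ≤ N ∧ 1 ≤ M then cap 6 (N-3) (M-1) else 0 : ℕ) : ℚ)
        = (if 2 ≤ M ∧ 9 ≤ N then t 8 15 (N-9) (M-2) else 0)
          + (if 1 ≤ M ∧ 3 ≤ N then t 5 9 (N-3) (M-1) else 0) := by
      by_cases hg : 3 ≤ N ∧ 1 ≤ M
      · rw [if_pos hg, if_pos (show 1 ≤ M ∧ 3 ≤ N by omega),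
          key6 (N-3) (M-1) (by omega), t7, add_comm]
        congr 1
        exact if_congr (by omega) rfl rfl
      · rw [if_neg hg, if_neg (show ¬ (2 ≤ M ∧ 9 ≤ N) by omega),
          if_neg (show ¬ (1 ≤ M ∧ 3 ≤ N) by omega)]
        simp
    rw [part]
    ring
  have h2 : (cap 2 N M : ℚ) = t 0 0 N M := by
    have c1 := cap_split2 N M
    have t8 := tA 0 0 N M; norm_num at t8
    have t9 := tB 1 0 N M; norm_num at t9
    have t10 := tB 4 6 (N-2) (M-1); norm_num at t10
    have t11 := tA 6 12 (N-6) (M-2); norm_num at t11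
    have e1 : N - 2 - 12 = N - 14 := by omega
    have e2 : M - 1 - 2 = M - 3 := by omega
    have e3 : N - 6 - 8 = N - 14 := by omega
    have e4 : M - 2 - 1 = M - 3 := by omega
    rw [e1, e2] at t10
    rw [e3, e4] at t11
    rw [c1, Nat.cast_add, Nat.cast_add, h3, t8, t9]
    have partA : ((if 2 ≤ N ∧ 1 ≤ M then cap 6 (N-2) (M-1) else 0 : ℕ) : ℚ)
        = (if 1 ≤ M ∧ 2 ≤ N then t 4 9 (N-2) (M-1) else 0) := by
      split_ifs with g1 g2 g3
      · exact key6 (N-2) (M-1) (by omega)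
      · omega
      · omega
      · simp
    have partB : ((if 6 ≤ N ∧ 2 ≤ M then cap 8 (N-6) (M-2) else 0 : ℕ) : ℚ)
        = (if 2 ≤ M ∧ 6 ≤ N then t 7 12 (N-6) (M-2) else 0)
          + (if 3 ≤ M ∧ 14 ≤ N then t 10 18 (N-14) (M-3) else 0) := by
      by_cases hg : 6 ≤ N ∧ 2 ≤ M
      · rw [if_pos hg, if_pos (show 2 ≤ M ∧ 6 ≤ N by omega),
          key8 (N-6) (M-2) (by omega), t11]
        congr 1
        exact if_congr (by omega) rfl rfl
      · rw [if_neg hg, if_neg (show ¬ (2 ≤ M ∧ 6 ≤ N) by omega),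
          if_neg (show ¬ (3 ≤ M ∧ 14 ≤ N) by omega)]
        simp
    have partC : (if 1 ≤ M ∧ 2 ≤ N then t 4 6 (N-2) (M-1) else 0 : ℚ)
        = (if 1 ≤ M ∧ 2 ≤ N then t 4 9 (N-2) (M-1) else 0)
          + (if 3 ≤ M ∧ 14 ≤ N then t 10 18 (N-14) (M-3) else 0) := by
      by_cases hg : 1 ≤ M ∧ 2 ≤ N
      · rw [if_pos hg, if_pos hg, t10]
        congr 1
        exact if_congr (by omega) rfl rfl
      · rw [if_neg hg, if_neg hg, if_neg (show ¬ (3 ≤ M ∧ 14 ≤ N) by omega)]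
        simp
    rw [partA, partB, partC]
    ring
  exact ⟨h2, h3, h4⟩

end Capparelli

open Capparelli in
/-- Andrews–Gordon type series for the first Capparelli identity. -/
theorem capparelli_first_genfunc (N M : ℕ) :
    (Nat.card {l : List ℕ // l.length = M ∧ (∀ x ∈ l, 2 ≤ x) ∧ l.sum = N ∧
        l.Chain' (fun a b => a + 2 ≤ b ∧ ((a + b) % 3 = 0 ∨ a + 4 ≤ b))} : ℚ) =
    ∑ p ∈ (range (N + 1) ×ˢ range (N + 1)).filter (fun p => p.1 + 2 * p.2 = M),
      coeff N (X ^ (2 * p.1 ^ 2 + 6 * p.1 * p.2 + 6 * p.2 ^ 2) *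
        (∏ j ∈ range p.1, (1 - X ^ (j + 1) : PowerSeries ℚ))⁻¹ *
        (∏ j ∈ range p.2, (1 - X ^ (3 * (j + 1)) : PowerSeries ℚ))⁻¹) := by
  have h := (Capparelli.main N M).1
  have h2 : (Nat.card {l : List ℕ // l.length = M ∧ (∀ x ∈ l, 2 ≤ x) ∧ l.sum = N ∧
      l.Chain' (fun a b => a + 2 ≤ b ∧ ((a + b) % 3 = 0 ∨ a + 4 ≤ b))} : ℚ)
      = (Capparelli.cap 2 N M : ℚ) := rfl
  rw [h2, h, Capparelli.t]
  refine Finset.sum_congr rfl fun p _ => ?_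
  simp [Capparelli.trm]
end

section
/- Let cp_0(n,m) be the number of partitions of n into m parts where consecutive parts differ by at least 2, and differ by at least 4 unless their sum is a multiple of 3. Then \sum_{m,n\ge 0} cp_0(n,m) q^n x^m = \sum_{n_1,n_2\ge 0} q^{6n_2^2+2n_1^2+6n_2 n_1}(1 + x q^{6n_2+3n_1+1}) x^{2n_2+n_1} / ((q;q)_{n_1}(q^3;q^3)_{n_2}). -/
open PowerSeries Finset

noncomputable section
namespace CP0



def P1 (n : ℕ) : PowerSeries ℚ := ∏ j ∈ range n, (1 - X ^ (j+1))
def P3 (n : ℕ) : PowerSeries ℚ := ∏ j ∈ range n, (1 - X ^ (3*(j+1)))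

lemma constP1 (n : ℕ) : constantCoeff (P1 n) ≠ 0 := by
  rw [P1, map_prod]
  have : ∀ j ∈ range n, constantCoeff (1 - X ^ (j+1) : PowerSeries ℚ) = 1 := by
    intro j _
    simp [constantCoeff_X, map_sub, map_pow]
  rw [Finset.prod_congr rfl this]
  simp

lemma constP3 (n : ℕ) : constantCoeff (P3 n) ≠ 0 := by
  rw [P3, map_prod]
  have : ∀ j ∈ range n, constantCoeff (1 - X ^ (3*(j+1)) : PowerSeries ℚ) = 1 := by
    intro j _
    have : 3*(j+1) ≠ 0 := by omega
    simp [constantCoeff_X, map_sub, map_pow, this]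
  rw [Finset.prod_congr rfl this]
  simp

lemma split1 (m : ℕ) : (1 - X^(m+1)) * (P1 (m+1))⁻¹ = (P1 m)⁻¹ := by
  have h : P1 (m+1) = P1 m * (1 - X^(m+1)) := by rw [P1, P1, prod_range_succ]
  have hu : P1 (m+1) * (P1 (m+1))⁻¹ = 1 := PowerSeries.mul_inv_cancel _ (constP1 _)
  have h2 : P1 m * ((1 - X^(m+1)) * (P1 (m+1))⁻¹) = 1 := by rw [← mul_assoc, ← h, hu]
  calc (1 - X^(m+1)) * (P1 (m+1))⁻¹
      = (P1 m)⁻¹ * (P1 m * ((1 - X^(m+1)) * (P1 (m+1))⁻¹)) := by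
        rw [← mul_assoc, PowerSeries.inv_mul_cancel _ (constP1 _), one_mul]
    _ = (P1 m)⁻¹ := by rw [h2, mul_one]

lemma split3 (m : ℕ) : (1 - X^(3*(m+1))) * (P3 (m+1))⁻¹ = (P3 m)⁻¹ := by
  have h : P3 (m+1) = P3 m * (1 - X^(3*(m+1))) := by rw [P3, P3, prod_range_succ]
  have hu : P3 (m+1) * (P3 (m+1))⁻¹ = 1 := PowerSeries.mul_inv_cancel _ (constP3 _)
  have h2 : P3 m * ((1 - X^(3*(m+1))) * (P3 (m+1))⁻¹) = 1 := by rw [← mul_assoc, ← h, hu]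
  calc (1 - X^(3*(m+1))) * (P3 (m+1))⁻¹
      = (P3 m)⁻¹ * (P3 m * ((1 - X^(3*(m+1))) * (P3 (m+1))⁻¹)) := by
        rw [← mul_assoc, PowerSeries.inv_mul_cancel _ (constP3 _), one_mul]
    _ = (P3 m)⁻¹ := by rw [h2, mul_one]

def trm (b n1 n2 : ℕ) : PowerSeries ℚ := X^b * (P1 n1)⁻¹ * (P3 n2)⁻¹

lemma trm_Xmul (k b n1 n2 : ℕ) : X^k * trm b n1 n2 = trm (k+b) n1 n2 := by
  rw [trm, trm, pow_add]; ring

lemma trm_sub1 (b m n2 : ℕ) : trm b (m+1) n2 - trm (b+(m+1)) (m+1) n2 = trm b m n2 := by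
  have : trm b (m+1) n2 - trm (b+(m+1)) (m+1) n2
      = (X^b * ((1 - X^(m+1)) * (P1 (m+1))⁻¹)) * (P3 n2)⁻¹ := by
    rw [trm, trm, pow_add]; ring
  rw [this, split1, trm]

lemma trm_sub3 (b n1 m : ℕ) : trm b n1 (m+1) - trm (b+3*(m+1)) n1 (m+1) = trm b n1 m := by
  have : trm b n1 (m+1) - trm (b+3*(m+1)) n1 (m+1)
      = (X^b * ((1 - X^(3*(m+1))) * (P3 (m+1))⁻¹)) * (P1 n1)⁻¹ := by
    rw [trm, trm, pow_add]; ring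
  rw [this, split3, trm]; ring


def Om (M : ℕ) : Finset (ℕ × ℕ) := (range (M+1) ×ˢ range (M+1)).filter (fun p => p.1 + 2*p.2 = M)

lemma mem_Om {M : ℕ} {p : ℕ × ℕ} : p ∈ Om M ↔ p.1 + 2*p.2 = M := by
  constructor
  · intro h; exact (mem_filter.mp h).2
  · intro h
    refine mem_filter.mpr ⟨mem_product.mpr ⟨mem_range.mpr ?_, mem_range.mpr ?_⟩, h⟩ <;> omega

def Q (p : ℕ × ℕ) : ℕ := 6*p.2^2 + 2*p.1^2 + 6*p.2*p.1

def U (c d e M : ℕ) : PowerSeries ℚ := ∑ p ∈ Om M, trm (Q p + (c*p.1 + d*p.2 + e)) p.1 p.2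

/-- L1 -/
lemma L1 (c d e M : ℕ) :
    U c d e (M+1) = U (c+1) d e (M+1) + U (c+4) (d+6) (e+c+2) M := by
  have key : U (c+4) (d+6) (e+c+2) M
      = ∑ p ∈ Om (M+1), (trm (Q p + (c*p.1 + d*p.2 + e)) p.1 p.2
          - trm (Q p + ((c+1)*p.1 + d*p.2 + e)) p.1 p.2) := by
    rw [U]
    rw [show Om (M+1) = (Om M).image (fun p => (p.1+1, p.2)) ∪ (Om (M+1)).filter (fun p => p.1 = 0) from ?_]
    · rw [Finset.sum_union ?_]
      · rw [Finset.sum_image ?_]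
        · have hz : ∑ p ∈ (Om (M+1)).filter (fun p => p.1 = 0),
              (trm (Q p + (c*p.1 + d*p.2 + e)) p.1 p.2
                - trm (Q p + ((c+1)*p.1 + d*p.2 + e)) p.1 p.2) = 0 := by
            apply Finset.sum_eq_zero
            intro p hp
            have h1 : p.1 = 0 := (mem_filter.mp hp).2
            rw [h1]; ring_nf
          rw [hz, add_zero]
          apply Finset.sum_congr rfl
          intro p _
          have e1 : Q (p.1+1, p.2) + (c*(p.1+1) + d*p.2 + e)
              = (Q p + ((c+4)*p.1 + (d+6)*p.2 + (e+c+2))) := by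
            simp only [Q]; ring
          have e2 : Q (p.1+1, p.2) + ((c+1)*(p.1+1) + d*p.2 + e)
              = (Q p + ((c+4)*p.1 + (d+6)*p.2 + (e+c+2))) + (p.1+1) := by
            simp only [Q]; ring
          simp only [e1, e2]
          exact (trm_sub1 _ _ _).symm
        · intro a _ b _ h
          simpa [Prod.ext_iff] using h
      · rw [Finset.disjoint_right]
        intro p hp hq
        have h1 : p.1 = 0 := (mem_filter.mp hp).2
        obtain ⟨q, _, rfl⟩ := Finset.mem_image.mp hq
        omega
    · ext p
      simp only [Finset.mem_union, Finset.mem_image, Finset.mem_filter, mem_Om]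
      constructor
      · intro h
        by_cases h0 : p.1 = 0
        · exact Or.inr ⟨h, h0⟩
        · refine Or.inl ⟨(p.1 - 1, p.2), by omega, ?_⟩
          obtain ⟨a, b⟩ := p
          have ha : a - 1 + 1 = a := by omega
          simpa [Prod.ext_iff] using ha
      · rintro (⟨q, hq, rfl⟩ | ⟨hp, _⟩)
        · show q.1 + 1 + 2 * q.2 = M + 1
          omega
        · exact hp
  rw [Finset.sum_sub_distrib] at key
  rw [show (∑ p ∈ Om (M+1), trm (Q p + (c*p.1 + d*p.2 + e)) p.1 p.2) = U c d e (M+1) from rfl,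
      show (∑ p ∈ Om (M+1), trm (Q p + ((c+1)*p.1 + d*p.2 + e)) p.1 p.2) = U (c+1) d e (M+1) from rfl] at key
  linear_combination -key

/-- L2 -/
lemma L2 (c d e M : ℕ) :
    U c d e (M+2) = U c (d+3) e (M+2) + U (c+6) (d+12) (e+d+6) M := by
  have key : U (c+6) (d+12) (e+d+6) M
      = ∑ p ∈ Om (M+2), (trm (Q p + (c*p.1 + d*p.2 + e)) p.1 p.2
          - trm (Q p + (c*p.1 + (d+3)*p.2 + e)) p.1 p.2) := by
    rw [U]
    rw [show Om (M+2) = (Om M).image (fun p => (p.1, p.2+1)) ∪ (Om (M+2)).filter (fun p => p.2 = 0) from ?_]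
    · rw [Finset.sum_union ?_]
      · rw [Finset.sum_image ?_]
        · have hz : ∑ p ∈ (Om (M+2)).filter (fun p => p.2 = 0),
              (trm (Q p + (c*p.1 + d*p.2 + e)) p.1 p.2
                - trm (Q p + (c*p.1 + (d+3)*p.2 + e)) p.1 p.2) = 0 := by
            apply Finset.sum_eq_zero
            intro p hp
            have h1 : p.2 = 0 := (mem_filter.mp hp).2
            rw [h1]; ring_nf
          rw [hz, add_zero]
          apply Finset.sum_congr rfl
          intro p _
          have e1 : Q (p.1, p.2+1) + (c*p.1 + d*(p.2+1) + e)
              = (Q p + ((c+6)*p.1 + (d+12)*p.2 + (e+d+6))) := by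
            simp only [Q]; ring
          have e2 : Q (p.1, p.2+1) + (c*p.1 + (d+3)*(p.2+1) + e)
              = (Q p + ((c+6)*p.1 + (d+12)*p.2 + (e+d+6))) + 3*(p.2+1) := by
            simp only [Q]; ring
          simp only [e1, e2]
          exact (trm_sub3 _ _ _).symm
        · intro a _ b _ h
          simpa [Prod.ext_iff] using h
      · rw [Finset.disjoint_right]
        intro p hp hq
        have h1 : p.2 = 0 := (mem_filter.mp hp).2
        obtain ⟨q, _, rfl⟩ := Finset.mem_image.mp hq
        omega
    · ext p
      simp only [Finset.mem_union, Finset.mem_image, Finset.mem_filter, mem_Om]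
      constructor
      · intro h
        by_cases h0 : p.2 = 0
        · exact Or.inr ⟨h, h0⟩
        · refine Or.inl ⟨(p.1, p.2 - 1), by omega, ?_⟩
          obtain ⟨a, b⟩ := p
          have hb : b - 1 + 1 = b := by omega
          simpa [Prod.ext_iff] using hb
      · rintro (⟨q, hq, rfl⟩ | ⟨hp, _⟩)
        · show q.1 + 2 * (q.2 + 1) = M + 2
          omega
        · exact hp
  rw [Finset.sum_sub_distrib] at key
  rw [show (∑ p ∈ Om (M+2), trm (Q p + (c*p.1 + d*p.2 + e)) p.1 p.2) = U c d e (M+2) from rfl,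
      show (∑ p ∈ Om (M+2), trm (Q p + (c*p.1 + (d+3)*p.2 + e)) p.1 p.2) = U c (d+3) e (M+2) from rfl] at key
  linear_combination -key

/-- L3 -/
lemma L3 (k c d e M : ℕ) : X^(3*M+k) * U c d e M = U (c+3) (d+6) (e+k) M := by
  rw [U, U, Finset.mul_sum]
  apply Finset.sum_congr rfl
  intro p hp
  have hM : p.1 + 2*p.2 = M := mem_Om.mp hp
  rw [trm_Xmul]
  have : 3*M+k + (Q p + (c*p.1 + d*p.2 + e)) = Q p + ((c+3)*p.1 + (d+6)*p.2 + (e+k)) := by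
    rw [← hM]; ring
  rw [this]

lemma Om_zero : Om 0 = {(0,0)} := by
  ext p; rw [mem_Om, Finset.mem_singleton, Prod.ext_iff]; omega

lemma U_c_irrel (c c' d e : ℕ) : U c d e 0 = U c' d e 0 := by
  rw [U, U, Om_zero]; simp

lemma U_d_irrel {M : ℕ} (hM : M ≤ 1) (c d d' e : ℕ) : U c d e M = U c d' e M := by
  rw [U, U]
  apply Finset.sum_congr rfl
  intro p hp
  have hm : p.1 + 2*p.2 = M := mem_Om.mp hp
  have h2 : p.2 = 0 := by omega
  rw [h2]; ring_nf


def V (c d e : ℕ) : ℕ → PowerSeries ℚ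
  | 0 => 0
  | (M+1) => U c d e M

def SA (M : ℕ) : PowerSeries ℚ := U 0 0 0 M + V 3 6 1 M
def SB (M : ℕ) : PowerSeries ℚ := U 1 0 0 M + V 4 6 2 M
def SC (M : ℕ) : PowerSeries ℚ := U 2 3 0 M + V 5 9 3 M
def SD (M : ℕ) : PowerSeries ℚ := U 1 0 0 M + V 4 6 1 M

lemma key361 (M : ℕ) : U 3 6 1 M = U 4 6 1 M + V 7 12 6 M := by
  cases M with
  | zero => rw [V, add_zero]; exact U_c_irrel _ _ _ _
  | succ M => rw [V]; exact L1 3 6 1 M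

/-- R1 -/
lemma R1 (M : ℕ) : SA (M+1) = SB (M+1) + X^(1+3*M) * SB M := by
  rw [SA, SB, SB, V, V, mul_add]
  have h1 : X^(1+3*M) * U 1 0 0 M = U 4 6 1 M := by
    have := L3 1 1 0 0 M; rw [show 3*M+1 = 1+3*M by ring] at this; exact this
  have h2 : X^(1+3*M) * V 4 6 2 M = V 7 12 6 M := by
    cases M with
    | zero => rw [V, V, mul_zero]
    | succ M =>
      rw [V, V]
      have := L3 4 4 6 2 M
      rw [show 3*M+4 = 1+3*(M+1) by ring] at this
      exact this
  rw [h1, h2, L1 0 0 0 M, key361 M]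

/-- R4 -/
lemma R4 (M : ℕ) : SA (M+1) = SD (M+1) + X^(2+3*M) * SD M := by
  rw [SA, SD, SD, V, V, mul_add]
  have h1 : X^(2+3*M) * U 1 0 0 M = U 4 6 2 M := by
    have := L3 2 1 0 0 M; rw [show 3*M+2 = 2+3*M by ring] at this; exact this
  have h2 : X^(2+3*M) * V 4 6 1 M = V 7 12 6 M := by
    cases M with
    | zero => rw [V, V, mul_zero]
    | succ M =>
      rw [V, V]
      have := L3 5 4 6 1 M
      rw [show 3*M+5 = 2+3*(M+1) by ring] at this
      exact this
  rw [h1, h2, L1 0 0 0 M, key361 M]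
  ring

lemma k1 (M : ℕ) : V 7 12 6 M = V 8 12 6 M + V 11 18 15 (M-1) := by
  cases M with
  | zero => rw [V, V, show (0:ℕ)-1 = 0 from rfl, V]; ring
  | succ M =>
    rw [V, V, show M+1-1 = M from rfl]
    cases M with
    | zero => rw [V, add_zero]; exact U_c_irrel _ _ _ _
    | succ M => rw [V]; exact L1 7 12 6 M

lemma k2 (M : ℕ) : U 5 6 3 M = U 5 9 3 M + V 11 18 15 (M-1) := by
  match M with
  | 0 => rw [show (0:ℕ)-1 = 0 from rfl, V, add_zero]; exact U_d_irrel (by norm_num) _ _ _ _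
  | 1 => rw [show (1:ℕ)-1 = 0 from rfl, V, add_zero]; exact U_d_irrel (by norm_num) _ _ _ _
  | (M+2) => rw [show M+2-1 = M+1 from rfl, V]; exact L2 5 6 3 M

lemma k3 (M : ℕ) : U 2 0 0 (M+1) = U 2 3 0 (M+1) + V 8 12 6 M := by
  cases M with
  | zero => rw [V, add_zero]; exact U_d_irrel (by norm_num) _ _ _ _
  | succ M => rw [V]; exact L2 2 0 0 M

/-- R2 -/
lemma R2 (M : ℕ) : SB (M+1) = SC (M+1) + X^(2+3*M) * SD M := by
  rw [SB, SC, SD, V, V, mul_add]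
  have h1 : X^(2+3*M) * U 1 0 0 M = U 4 6 2 M := by
    have := L3 2 1 0 0 M; rw [show 3*M+2 = 2+3*M by ring] at this; exact this
  have h2 : X^(2+3*M) * V 4 6 1 M = V 7 12 6 M := by
    cases M with
    | zero => rw [V, V, mul_zero]
    | succ M =>
      rw [V, V]
      have := L3 5 4 6 1 M
      rw [show 3*M+5 = 2+3*(M+1) by ring] at this
      exact this
  rw [h1, h2]
  have h3 : U 1 0 0 (M+1) = U 2 0 0 (M+1) + U 5 6 3 M := L1 1 0 0 M
  rw [h3, k3 M, k2 M, k1 M]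
  ring

lemma k4 (M : ℕ) : U 2 3 0 (M+1) = U 2 6 0 (M+1) + V 8 15 9 M := by
  cases M with
  | zero => rw [V, add_zero]; exact U_d_irrel (by norm_num) _ _ _ _
  | succ M => rw [V]; exact L2 2 3 0 M

/-- R3 -/
lemma R3 (M : ℕ) : SC (M+1) = X^(3+3*M) * SC M + X^(3*(M+1)) * SA (M+1) := by
  rw [SC, SC, SA, V, V, mul_add, mul_add]
  have h1 : X^(3+3*M) * U 2 3 0 M = U 5 9 3 M := by
    have := L3 3 2 3 0 M; rw [show 3*M+3 = 3+3*M by ring] at this; exact this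
  have h2 : X^(3+3*M) * V 5 9 3 M = V 8 15 9 M := by
    cases M with
    | zero => rw [V, V, mul_zero]
    | succ M =>
      rw [V, V]
      have := L3 6 5 9 3 M
      rw [show 3*M+6 = 3+3*(M+1) by ring] at this
      exact this
  have h3 : X^(3*(M+1)) * U 0 0 0 (M+1) = U 3 6 0 (M+1) := by
    have := L3 0 0 0 0 (M+1); rw [show 3*(M+1)+0 = 3*(M+1) by ring] at this; exact this
  have h4 : X^(3*(M+1)) * U 3 6 1 M = U 6 12 4 M := by
    have := L3 3 3 6 1 M; rw [show 3*M+3 = 3*(M+1) by ring] at this; exact this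
  rw [h1, h2, h3, h4]
  have h5 : U 2 3 0 (M+1) = U 3 6 0 (M+1) + U 6 12 4 M + V 8 15 9 M := by
    rw [k4 M, L1 2 6 0 M]
  rw [h5]
  ring


def Ok (a b : ℕ) : Prop := a + 2 ≤ b ∧ ((a + b) % 3 = 0 ∨ a + 4 ≤ b)

lemma ok1 (x : ℕ) : Ok 1 x ↔ 5 ≤ x := by unfold Ok; omega
lemma ok2 (x : ℕ) : Ok 2 x ↔ (4 ≤ x ∧ x ≠ 5) := by unfold Ok; omega
lemma ok3 (x : ℕ) : Ok 3 x ↔ 6 ≤ x := by unfold Ok; omega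
lemma ok_le {a b : ℕ} (h : Ok a b) : a ≤ b := by unfold Ok at h; omega
lemma ok_sub3 {a b : ℕ} (ha : 4 ≤ a) (h : Ok a b) : Ok (a-3) (b-3) := by
  unfold Ok at *; omega
lemma ok_add3 {a b : ℕ} (h : Ok a b) : Ok (a+3) (b+3) := by
  unfold Ok at *; omega

def W (P : ℕ → Prop) (c N M : ℕ) : Type :=
  {l : List ℕ // l.length = M ∧ (∀ x ∈ l, 0 < x) ∧ c + l.sum = N ∧ l.Chain' Ok ∧
    ∀ x ∈ l.head?, P x}

instance instFiniteW (P : ℕ → Prop) (c N M : ℕ) : Finite (W P c N M) := by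
  apply Finite.of_injective (β := Fin M → Fin (N+1))
    (f := fun l i => ⟨l.1.get (Fin.cast l.2.1.symm i), by
      have hmem : l.1.get (Fin.cast l.2.1.symm i) ∈ l.1 := l.1.get_mem _
      have h1 : l.1.get (Fin.cast l.2.1.symm i) ≤ l.1.sum :=
        List.single_le_sum (fun _ _ => Nat.zero_le _) _ hmem
      have h2 := l.2.2.2.1
      omega⟩)
  intro a b hab
  apply Subtype.ext
  apply List.ext_get (by rw [a.2.1, b.2.1])
  intro n h1 h2
  have hA := a.2.1
  have hB := b.2.1
  have := congrFun hab ⟨n, by omega⟩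
  simpa [Fin.ext_iff] using this

lemma head_le_of_chain : ∀ (l : List ℕ), l.Chain' Ok → ∀ h ∈ l.head?, ∀ x ∈ l, h ≤ x
  | [] => by intro _ h hh; simp at hh
  | a :: t => by
    intro hc h hh x hx
    have ha : a = h := by simpa using hh
    subst ha
    rcases List.mem_cons.mp hx with rfl | hx'
    · exact le_refl _
    · obtain ⟨hhead, hct⟩ := List.isChain_cons.mp hc
      cases t with
      | nil => simp at hx'
      | cons b t' =>
        have hab : Ok a b := hhead b rfl
        have := head_le_of_chain (b :: t') hct b rfl x hx'
        exact le_trans (ok_le hab) this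

lemma sum_map_sub3 : ∀ (l : List ℕ), (∀ x ∈ l, 3 ≤ x) →
    (l.map (· - 3)).sum + 3 * l.length = l.sum
  | [] => by simp
  | a :: t => by
    intro h
    have ha : 3 ≤ a := h a List.mem_cons_self
    have := sum_map_sub3 t (fun x hx => h x (List.mem_cons_of_mem _ hx))
    simp only [List.map_cons, List.sum_cons, List.length_cons]
    omega

lemma sum_map_add3 : ∀ (l : List ℕ), (l.map (· + 3)).sum = l.sum + 3 * l.length
  | [] => by simp
  | a :: t => by
    have := sum_map_add3 t
    simp only [List.map_cons, List.sum_cons, List.length_cons]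
    omega

lemma chain_map_sub3 : ∀ (l : List ℕ), (∀ x ∈ l, 4 ≤ x) → l.Chain' Ok →
    (l.map (· - 3)).Chain' Ok
  | [] => by intro _ _; exact List.isChain_nil
  | [a] => by intro _ _; exact List.isChain_singleton _
  | a :: b :: t => by
    intro h4 hc
    obtain ⟨hab, hct⟩ := List.isChain_cons_cons.mp hc
    have ih := chain_map_sub3 (b :: t) (fun x hx => h4 x (List.mem_cons_of_mem _ hx)) hct
    simp only [List.map_cons] at ih ⊢
    exact List.isChain_cons_cons.mpr ⟨ok_sub3 (h4 a List.mem_cons_self) hab, ih⟩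

lemma chain_map_add3 (l : List ℕ) (hc : l.Chain' Ok) : (l.map (· + 3)).Chain' Ok := by
  show List.IsChain _ _
  rw [List.isChain_map]
  exact (show List.IsChain Ok l from hc).imp (fun a b h => ok_add3 h)

/-- congruence in the head predicate -/
lemma W_congr {P P' : ℕ → Prop} (h : ∀ x, 0 < x → (P x ↔ P' x)) (c N M : ℕ) :
    Nat.card (W P c N M) = Nat.card (W P' c N M) := by
  apply Nat.card_congr
  apply Equiv.subtypeEquivRight
  intro l
  constructor
  · rintro ⟨h1, h2, h3, h4, h5⟩
    refine ⟨h1, h2, h3, h4, fun x hx => ?_⟩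
    have hxl : x ∈ l := List.mem_of_mem_head? hx
    exact (h x (h2 x hxl)).mp (h5 x hx)
  · rintro ⟨h1, h2, h3, h4, h5⟩
    refine ⟨h1, h2, h3, h4, fun x hx => ?_⟩
    have hxl : x ∈ l := List.mem_of_mem_head? hx
    exact (h x (h2 x hxl)).mpr (h5 x hx)


section CardHead
variable {P P' Pv : ℕ → Prop} {v : ℕ}

def WProp (P : ℕ → Prop) (c N M : ℕ) (l : List ℕ) : Prop :=
  l.length = M ∧ (∀ x ∈ l, 0 < x) ∧ c + l.sum = N ∧ l.Chain' Ok ∧ ∀ x ∈ l.head?, P x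

lemma wprop_tail (hPv : ∀ x, Ok v x ↔ Pv x) {c N M : ℕ} {l : List ℕ}
    (h : WProp P c N (M+1) l) (hh : l.head? = some v) : WProp Pv (c+v) N M l.tail := by
  obtain ⟨h1, h2, h3, h4, h5⟩ := h
  cases l with
  | nil => simp at hh
  | cons a t =>
    have hav : a = v := by simpa using hh
    subst hav
    obtain ⟨hhead, hct⟩ := List.isChain_cons.mp h4
    simp only [List.length_cons] at h1
    simp only [List.sum_cons] at h3
    exact ⟨by simpa using h1, fun x hx => h2 x (List.mem_cons_of_mem _ hx),
      by simp only [List.tail_cons]; omega, hct, fun x hx => (hPv x).mp (hhead x hx)⟩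

lemma wprop_cons (hv : 0 < v) (hsplit : ∀ x, 0 < x → (P x ↔ (x = v ∨ P' x)))
    (hPv : ∀ x, Ok v x ↔ Pv x) {c N M : ℕ} {t : List ℕ}
    (h : WProp Pv (c+v) N M t) : WProp P c N (M+1) (v :: t) := by
  obtain ⟨h1, h2, h3, h4, h5⟩ := h
  refine ⟨by simp [h1], ?_, by simp only [List.sum_cons]; omega,
    List.isChain_cons.mpr ⟨fun y hy => (hPv y).mpr (h5 y hy), h4⟩, ?_⟩
  · intro x hx
    rcases List.mem_cons.mp hx with rfl | hx'
    · exact hv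
    · exact h2 x hx'
  · intro x hx
    have hxv : x = v := by
      have := hx
      simp only [List.head?_cons, Option.mem_def, Option.some.injEq] at this
      omega
    subst hxv
    exact (hsplit x hv).mpr (Or.inl rfl)

lemma wprop_weaken (hsplit : ∀ x, 0 < x → (P x ↔ (x = v ∨ P' x))) {c N M : ℕ} {l : List ℕ}
    (h : WProp P c N M l) (hh : ¬ l.head? = some v) : WProp P' c N M l := by
  obtain ⟨h1, h2, h3, h4, h5⟩ := h
  refine ⟨h1, h2, h3, h4, fun x hx => ?_⟩
  have hxl : x ∈ l := List.mem_of_mem_head? hx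
  have hxv : x ≠ v := by
    intro hxveq; subst hxveq
    exact hh (by simpa using hx)
  rcases (hsplit x (h2 x hxl)).mp (h5 x hx) with h | h
  · exact absurd h hxv
  · exact h

lemma wprop_strengthen (hsplit : ∀ x, 0 < x → (P x ↔ (x = v ∨ P' x)))
    (hne : ∀ x, 0 < x → P' x → x ≠ v) {c N M : ℕ} {l : List ℕ}
    (h : WProp P' c N M l) : WProp P c N M l ∧ ¬ l.head? = some v := by
  obtain ⟨h1, h2, h3, h4, h5⟩ := h
  constructor
  · refine ⟨h1, h2, h3, h4, fun x hx => ?_⟩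
    have hxl : x ∈ l := List.mem_of_mem_head? hx
    exact (hsplit x (h2 x hxl)).mpr (Or.inr (h5 x hx))
  · intro hh
    cases l with
    | nil => simp at hh
    | cons a t =>
      have hav : a = v := by simpa using hh
      exact hne a (h2 a List.mem_cons_self) (h5 a rfl) hav

/-- generic head-splitting -/
lemma card_head (hv : 0 < v)
    (hsplit : ∀ x, 0 < x → (P x ↔ (x = v ∨ P' x)))
    (hne : ∀ x, 0 < x → P' x → x ≠ v)
    (hPv : ∀ x, Ok v x ↔ Pv x)
    (c N M : ℕ) :
    Nat.card (W P c N (M+1)) = Nat.card (W P' c N (M+1)) + Nat.card (W Pv (c+v) N M) := by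
  classical
  have e : W P c N (M+1) ≃ (W Pv (c+v) N M) ⊕ (W P' c N (M+1)) := by
    refine ⟨fun l => if h : l.1.head? = some v
        then Sum.inl ⟨l.1.tail, wprop_tail hPv l.2 h⟩
        else Sum.inr ⟨l.1, wprop_weaken hsplit l.2 h⟩,
      Sum.elim (fun t => ⟨v :: t.1, wprop_cons hv hsplit hPv t.2⟩)
        (fun l => ⟨l.1, (wprop_strengthen hsplit hne l.2).1⟩), ?_, ?_⟩
    · intro l
      by_cases h : l.1.head? = some v
      · simp only [dif_pos h, Sum.elim_inl]
        apply Subtype.ext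
        obtain ⟨l, hl⟩ := l
        cases l with
        | nil => simp at h
        | cons a t =>
          have hav : a = v := by simpa using h
          subst hav
          rfl
      · simp only [dif_neg h, Sum.elim_inr]
        exact Subtype.ext rfl
    · intro t
      rcases t with t | l
      · dsimp only [Sum.elim_inl]
        refine (dif_pos (show (v :: t.1).head? = some v from rfl)).trans ?_
        exact congrArg (@Sum.inl (W Pv (c+v) N M) (W P' c N (M+1))) (Subtype.ext rfl)
      · dsimp only [Sum.elim_inr]
        refine (dif_neg (wprop_strengthen hsplit hne l.2).2).trans ?_
        exact congrArg (@Sum.inr (W Pv (c+v) N M) (W P' c N (M+1))) (Subtype.ext rfl)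
  rw [Nat.card_congr e, Nat.card_sum, add_comm]

end CardHead

lemma wprop_all4 {P : ℕ → Prop} (hP : ∀ x, P x → 4 ≤ x) {c N M : ℕ} {l : List ℕ}
    (h : WProp P c N M l) : ∀ x ∈ l, 4 ≤ x := by
  obtain ⟨h1, h2, h3, h4, h5⟩ := h
  intro x hx
  cases l with
  | nil => simp at hx
  | cons a t =>
    have h4a : 4 ≤ a := hP a (h5 a rfl)
    exact le_trans h4a (head_le_of_chain _ h4 a rfl x hx)

lemma wprop_down {P : ℕ → Prop} (hP : ∀ x, P x → 4 ≤ x) {c N M : ℕ} {l : List ℕ}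
    (h : WProp P c N M l) : WProp (fun x => P (x+3)) (c+3*M) N M (l.map (· - 3)) := by
  have hall := wprop_all4 hP h
  obtain ⟨h1, h2, h3, h4, h5⟩ := h
  have hsum := sum_map_sub3 l (fun x hx => by have := hall x hx; omega)
  refine ⟨by simp [h1], ?_, by rw [h1] at hsum; omega, chain_map_sub3 l hall h4, ?_⟩
  · intro x hx
    obtain ⟨y, hy, rfl⟩ := List.mem_map.mp hx
    have := hall y hy; omega
  · intro x hx
    rw [List.head?_map] at hx
    match l, hx with
    | a :: t, hx =>
      have hxa : a - 3 = x := by simpa using hx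
      have h4a : 4 ≤ a := hall a List.mem_cons_self
      have : x + 3 = a := by omega
      rw [this]
      exact h5 a rfl

lemma wprop_up {P : ℕ → Prop} {c N M : ℕ} {l : List ℕ}
    (h : WProp (fun x => P (x+3)) (c+3*M) N M l) : WProp P c N M (l.map (· + 3)) := by
  obtain ⟨h1, h2, h3, h4, h5⟩ := h
  have hsum := sum_map_add3 l
  refine ⟨by simp [h1], ?_, by rw [h1] at hsum; omega, chain_map_add3 l h4, ?_⟩
  · intro x hx
    obtain ⟨y, hy, rfl⟩ := List.mem_map.mp hx
    omega
  · intro x hx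
    rw [List.head?_map] at hx
    match l, hx with
    | a :: t, hx =>
      have hxa : a + 3 = x := by simpa using hx
      rw [← hxa]
      exact h5 a rfl

/-- shifting all parts down by 3 -/
lemma card_shift (P : ℕ → Prop) (hP : ∀ x, P x → 4 ≤ x) (c N M : ℕ) :
    Nat.card (W P c N M) = Nat.card (W (fun x => P (x+3)) (c+3*M) N M) := by
  apply Nat.card_congr
  refine ⟨fun l => ⟨l.1.map (· - 3), wprop_down hP l.2⟩,
    fun l => ⟨l.1.map (· + 3), wprop_up l.2⟩, ?_, ?_⟩
  · intro l
    apply Subtype.ext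
    have hall := wprop_all4 hP l.2
    simp only [List.map_map]
    have hid : ∀ x ∈ l.1, ((· + 3) ∘ (· - 3)) x = id x := by
      intro x hx
      have := hall x hx
      simp only [Function.comp_apply, id_eq]
      omega
    rw [List.map_congr_left hid, List.map_id]
  · intro l
    apply Subtype.ext
    simp only [List.map_map]
    have hid : ∀ x ∈ l.1, ((· - 3) ∘ (· + 3)) x = id x := by
      intro x hx
      simp
    rw [List.map_congr_left hid, List.map_id]

lemma W_c_shift (P : ℕ → Prop) {c N : ℕ} (h : c ≤ N) (M : ℕ) :
    Nat.card (W P c N M) = Nat.card (W P 0 (N - c) M) := by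
  apply Nat.card_congr
  apply Equiv.subtypeEquivRight
  intro l
  constructor <;>
  · rintro ⟨h1, h2, h3, h4, h5⟩
    exact ⟨h1, h2, by omega, h4, h5⟩

lemma W_c_big (P : ℕ → Prop) {c N : ℕ} (h : N < c) (M : ℕ) :
    Nat.card (W P c N M) = 0 := by
  have : IsEmpty (W P c N M) := by
    constructor
    rintro ⟨l, h1, h2, h3, h4, h5⟩
    omega
  exact Nat.card_of_isEmpty

lemma W_M_zero (P : ℕ → Prop) (c N : ℕ) :
    Nat.card (W P c N 0) = if N = c then 1 else 0 := by
  by_cases h : N = c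
  · rw [if_pos h]
    have : Unique (W P c N 0) := by
      refine ⟨⟨⟨[], rfl, by simp, by simp; omega, List.isChain_nil, by simp⟩⟩, ?_⟩
      rintro ⟨l, h1, h2, h3, h4, h5⟩
      apply Subtype.ext
      exact List.length_eq_zero_iff.mp h1
    exact Nat.card_unique
  · rw [if_neg h]
    have : IsEmpty (W P c N 0) := by
      constructor
      rintro ⟨l, h1, h2, h3, h4, h5⟩
      have : l = [] := List.length_eq_zero_iff.mp h1
      subst this
      simp at h3
      omega
    exact Nat.card_of_isEmpty


lemma inv_one' : (1 : PowerSeries ℚ)⁻¹ = 1 := by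
  have h := PowerSeries.mul_inv_cancel (1 : PowerSeries ℚ) (by simp)
  simpa using h

lemma U_zero (c d : ℕ) : U c d 0 0 = 1 := by
  rw [U, Om_zero, Finset.sum_singleton]
  rw [show Q (0,0) + (c*0 + d*0 + 0) = 0 from by simp [Q]]
  rw [trm, P1, P3]
  simp [inv_one']

lemma coeff_trm_zero {N b : ℕ} (h : N < b) (n1 n2 : ℕ) : coeff N (trm b n1 n2) = 0 := by
  rw [trm, mul_assoc, PowerSeries.coeff_X_pow_mul', if_neg (by omega)]

lemma coeff_outside {N : ℕ} {p : ℕ×ℕ} (hp : N+1 ≤ p.1 ∨ N+1 ≤ p.2) (k : ℕ) :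
    coeff N (trm (Q p + k) p.1 p.2) = 0 := by
  apply coeff_trm_zero
  have h1 : p.1 ≤ p.1^2 := Nat.le_self_pow two_ne_zero _
  have h2 : p.2 ≤ p.2^2 := Nat.le_self_pow two_ne_zero _
  have h3 : 0 ≤ 6*p.2*p.1 := Nat.zero_le _
  unfold Q
  rcases hp with h | h <;> nlinarith

lemma sum1_eq (N M : ℕ) :
    (∑ p ∈ (range (N + 1) ×ˢ range (N + 1)).filter (fun p => p.1 + 2 * p.2 = M),
      coeff N (X ^ (6 * p.2 ^ 2 + 2 * p.1 ^ 2 + 6 * p.2 * p.1) *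
        (∏ j ∈ range p.1, (1 - X ^ (j + 1) : PowerSeries ℚ))⁻¹ *
        (∏ j ∈ range p.2, (1 - X ^ (3 * (j + 1)) : PowerSeries ℚ))⁻¹))
    = coeff N (U 0 0 0 M) := by
  rw [U, map_sum]
  have hfun : ∀ p : ℕ × ℕ,
      coeff N (X ^ (6 * p.2 ^ 2 + 2 * p.1 ^ 2 + 6 * p.2 * p.1) *
        (∏ j ∈ range p.1, (1 - X ^ (j + 1) : PowerSeries ℚ))⁻¹ *
        (∏ j ∈ range p.2, (1 - X ^ (3 * (j + 1)) : PowerSeries ℚ))⁻¹)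
      = coeff N (trm (Q p + (0*p.1 + 0*p.2 + 0)) p.1 p.2) := by
    intro p
    rw [show Q p + (0*p.1 + 0*p.2 + 0) = 6*p.2^2 + 2*p.1^2 + 6*p.2*p.1 from by unfold Q; ring]
    rfl
  rw [Finset.sum_congr rfl (fun p _ => hfun p)]
  apply Finset.sum_subset
  · intro p hp
    exact mem_Om.mpr (Finset.mem_filter.mp hp).2
  · intro p hp hnp
    have hc : p.1 + 2*p.2 = M := mem_Om.mp hp
    have : N+1 ≤ p.1 ∨ N+1 ≤ p.2 := by
      by_contra hcon
      push_neg at hcon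
      exact hnp (Finset.mem_filter.mpr ⟨Finset.mem_product.mpr
        ⟨Finset.mem_range.mpr (by omega), Finset.mem_range.mpr (by omega)⟩, hc⟩)
    exact coeff_outside this _

lemma sum2_eq (N M : ℕ) :
    (∑ p ∈ (range (N + 1) ×ˢ range (N + 1)).filter (fun p => p.1 + 2 * p.2 + 1 = M),
      coeff N (X ^ (6 * p.2 ^ 2 + 2 * p.1 ^ 2 + 6 * p.2 * p.1 +
          (6 * p.2 + 3 * p.1 + 1)) *
        (∏ j ∈ range p.1, (1 - X ^ (j + 1) : PowerSeries ℚ))⁻¹ *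
        (∏ j ∈ range p.2, (1 - X ^ (3 * (j + 1)) : PowerSeries ℚ))⁻¹))
    = coeff N (V 3 6 1 M) := by
  cases M with
  | zero =>
    rw [Finset.filter_false_of_mem (fun p _ => by omega), Finset.sum_empty]
    rw [show V 3 6 1 0 = 0 from rfl, map_zero]
  | succ M =>
    rw [show V 3 6 1 (M+1) = U 3 6 1 M from rfl, U, map_sum]
    have hfun : ∀ p : ℕ × ℕ,
        coeff N (X ^ (6 * p.2 ^ 2 + 2 * p.1 ^ 2 + 6 * p.2 * p.1 + (6 * p.2 + 3 * p.1 + 1)) *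
          (∏ j ∈ range p.1, (1 - X ^ (j + 1) : PowerSeries ℚ))⁻¹ *
          (∏ j ∈ range p.2, (1 - X ^ (3 * (j + 1)) : PowerSeries ℚ))⁻¹)
        = coeff N (trm (Q p + (3*p.1 + 6*p.2 + 1)) p.1 p.2) := by
      intro p
      rw [show Q p + (3*p.1 + 6*p.2 + 1)
          = 6*p.2^2 + 2*p.1^2 + 6*p.2*p.1 + (6*p.2 + 3*p.1 + 1) from by unfold Q; ring]
      rfl
    rw [Finset.sum_congr rfl (fun p _ => hfun p)]
    apply Finset.sum_subset
    · intro p hp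
      have := (Finset.mem_filter.mp hp).2
      exact mem_Om.mpr (by omega)
    · intro p hp hnp
      have hc : p.1 + 2*p.2 = M := mem_Om.mp hp
      have : N+1 ≤ p.1 ∨ N+1 ≤ p.2 := by
        by_contra hcon
        push_neg at hcon
        exact hnp (Finset.mem_filter.mpr ⟨Finset.mem_product.mpr
          ⟨Finset.mem_range.mpr (by omega), Finset.mem_range.mpr (by omega)⟩, by omega⟩)
      exact coeff_outside this _

lemma F1 (N M : ℕ) : Nat.card (W (fun _ => True) 0 N (M+1))
    = Nat.card (W (2 ≤ ·) 0 N (M+1)) + Nat.card (W (2 ≤ ·) (1+3*M) N M) := by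
  rw [card_head (P' := (2 ≤ ·)) (Pv := (5 ≤ ·)) (v := 1) one_pos
    (fun x hx => ⟨fun _ => by omega, fun _ => trivial⟩)
    (fun x hx h2 => by omega) ok1 0 N M]
  congr 1
  rw [card_shift (5 ≤ ·) (fun x hx => by omega) (0+1) N M,
    W_congr (P' := (2 ≤ ·)) (fun x hx => by omega) (0+1+3*M) N M,
    show 0+1+3*M = 1+3*M by omega]

lemma F2 (N M : ℕ) : Nat.card (W (2 ≤ ·) 0 N (M+1))
    = Nat.card (W (3 ≤ ·) 0 N (M+1)) + Nat.card (W (· ≠ 2) (2+3*M) N M) := by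
  rw [card_head (P' := (3 ≤ ·)) (Pv := fun x => 4 ≤ x ∧ x ≠ 5) (v := 2) (by omega)
    (fun x hx => by omega) (fun x hx h2 => by omega) ok2 0 N M]
  congr 1
  rw [card_shift _ (fun x hx => hx.1) (0+2) N M,
    W_congr (P' := (· ≠ 2)) (fun x hx => by simp only [ne_eq]; omega) (0+2+3*M) N M,
    show 0+2+3*M = 2+3*M by omega]

lemma F3 (N M : ℕ) : Nat.card (W (3 ≤ ·) 0 N (M+1))
    = Nat.card (W (3 ≤ ·) (3+3*M) N M) + Nat.card (W (fun _ => True) (3*(M+1)) N (M+1)) := by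
  rw [card_head (P' := (4 ≤ ·)) (Pv := (6 ≤ ·)) (v := 3) (by omega)
    (fun x hx => by omega) (fun x hx h2 => by omega) ok3 0 N M]
  rw [add_comm]
  congr 1
  · rw [card_shift (6 ≤ ·) (fun x hx => by omega) (0+3) N M,
      W_congr (P' := (3 ≤ ·)) (fun x hx => by omega) (0+3+3*M) N M,
      show 0+3+3*M = 3+3*M by omega]
  · rw [card_shift (4 ≤ ·) (fun x hx => hx) 0 N (M+1),
      W_congr (P' := fun _ => True) (fun x hx => by simp only [iff_true]; omega) (0+3*(M+1)) N (M+1),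
      show 0+3*(M+1) = 3*(M+1) by omega]

lemma F4 (N M : ℕ) : Nat.card (W (fun _ => True) 0 N (M+1))
    = Nat.card (W (· ≠ 2) 0 N (M+1)) + Nat.card (W (· ≠ 2) (2+3*M) N M) := by
  rw [card_head (P' := (· ≠ 2)) (Pv := fun x => 4 ≤ x ∧ x ≠ 5) (v := 2) (by omega)
    (fun x hx => ⟨fun _ => by omega, fun _ => trivial⟩)
    (fun x hx h2 => h2) ok2 0 N M]
  congr 1
  rw [card_shift _ (fun x hx => hx.1) (0+2) N M,
    W_congr (P' := (· ≠ 2)) (fun x hx => by simp only [ne_eq]; omega) (0+2+3*M) N M,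
    show 0+2+3*M = 2+3*M by omega]

lemma bridge {P : ℕ → Prop} {S : PowerSeries ℚ} {M₀ : ℕ}
    (hIH : ∀ N', (Nat.card (W P 0 N' M₀) : ℚ) = coeff N' S) (k N : ℕ) :
    (Nat.card (W P k N M₀) : ℚ) = coeff N (X^k * S) := by
  rcases le_or_gt k N with h | h
  · rw [W_c_shift P h, PowerSeries.coeff_X_pow_mul', if_pos h]
    exact hIH _
  · rw [W_c_big P h, PowerSeries.coeff_X_pow_mul', if_neg (by omega)]
    simp

lemma bridge' {P : ℕ → Prop} {S : PowerSeries ℚ} {M₀ : ℕ} {N : ℕ}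
    (hIH : ∀ N' < N, (Nat.card (W P 0 N' M₀) : ℚ) = coeff N' S) {k : ℕ} (hk : 0 < k) :
    (Nat.card (W P k N M₀) : ℚ) = coeff N (X^k * S) := by
  rcases le_or_gt k N with h | h
  · rw [W_c_shift P h, PowerSeries.coeff_X_pow_mul', if_pos h]
    exact hIH _ (by omega)
  · rw [W_c_big P h, PowerSeries.coeff_X_pow_mul', if_neg (by omega)]
    simp

theorem main (M : ℕ) : ∀ N : ℕ,
    ((Nat.card (W (fun _ => True) 0 N M) : ℚ) = coeff N (SA M))
  ∧ ((Nat.card (W (2 ≤ ·) 0 N M) : ℚ) = coeff N (SB M))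
  ∧ ((Nat.card (W (3 ≤ ·) 0 N M) : ℚ) = coeff N (SC M))
  ∧ ((Nat.card (W (· ≠ 2) 0 N M) : ℚ) = coeff N (SD M)) := by
  induction M with
  | zero =>
    intro N
    have hcard : ∀ P : ℕ → Prop, (Nat.card (W P 0 N 0) : ℚ) = if N = 0 then 1 else 0 := by
      intro P
      rw [W_M_zero]
      split_ifs <;> simp
    refine ⟨?_, ?_, ?_, ?_⟩ <;>
    · rw [hcard]
      show _ = coeff N (U _ _ 0 0 + V _ _ _ 0)
      rw [show V _ _ _ 0 = 0 from rfl, add_zero, U_zero, PowerSeries.coeff_one]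
  | succ M IH =>
    intro N
    induction N using Nat.strong_induction_on with
    | _ N IHN =>
    have hC : (Nat.card (W (3 ≤ ·) 0 N (M+1)) : ℚ) = coeff N (SC (M+1)) := by
      rw [F3, R3, map_add]
      push_cast
      congr 1
      · exact bridge (fun N' => (IH N').2.2.1) (3+3*M) N
      · exact bridge' (fun N' h => (IHN N' h).1) (by omega)
    have hA : (Nat.card (W (fun _ => True) 0 N (M+1)) : ℚ) = coeff N (SA (M+1)) := by
      rw [F1, F2, R1, R2, map_add, map_add]
      push_cast
      rw [hC]
      rw [bridge (fun N' => (IH N').2.2.2) (2+3*M) N,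
        bridge (fun N' => (IH N').2.1) (1+3*M) N]
    have hD : (Nat.card (W (· ≠ 2) 0 N (M+1)) : ℚ) = coeff N (SD (M+1)) := by
      have h1 := F4 N M
      have h2 := congrArg (coeff N) (R4 M)
      rw [map_add] at h2
      have h3 := bridge (fun N' => (IH N').2.2.2) (2+3*M) N
      have h4 : ((Nat.card (W (fun _ => True) 0 N (M+1)) : ℕ) : ℚ)
          = (Nat.card (W (· ≠ 2) 0 N (M+1)) : ℚ) + (Nat.card (W (· ≠ 2) (2+3*M) N M) : ℚ) := by
        rw [h1]; push_cast; ring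
      rw [hA] at h4
      rw [h2] at h4
      linarith [h3, h4]
    have hB : (Nat.card (W (2 ≤ ·) 0 N (M+1)) : ℚ) = coeff N (SB (M+1)) := by
      rw [F2, R2, map_add]
      push_cast
      rw [hC, bridge (fun N' => (IH N').2.2.2) (2+3*M) N]
    exact ⟨hA, hB, hC, hD⟩


end CP0

open CP0 in
/-- Andrews–Gordon type series for `cp₀(n,m)` (no restriction on the smallest part),
stated coefficient-wise in `q` and `x`. -/
theorem cp0_genfunc (N M : ℕ) :
    (Nat.card {l : List ℕ // l.length = M ∧ (∀ x ∈ l, 0 < x) ∧ l.sum = N ∧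
        l.Chain' (fun a b => a + 2 ≤ b ∧ ((a + b) % 3 = 0 ∨ a + 4 ≤ b))} : ℚ) =
    (∑ p ∈ (range (N + 1) ×ˢ range (N + 1)).filter (fun p => p.1 + 2 * p.2 = M),
      coeff N (X ^ (6 * p.2 ^ 2 + 2 * p.1 ^ 2 + 6 * p.2 * p.1) *
        (∏ j ∈ range p.1, (1 - X ^ (j + 1) : PowerSeries ℚ))⁻¹ *
        (∏ j ∈ range p.2, (1 - X ^ (3 * (j + 1)) : PowerSeries ℚ))⁻¹)) +
    (∑ p ∈ (range (N + 1) ×ˢ range (N + 1)).filter (fun p => p.1 + 2 * p.2 + 1 = M),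
      coeff N (X ^ (6 * p.2 ^ 2 + 2 * p.1 ^ 2 + 6 * p.2 * p.1 +
          (6 * p.2 + 3 * p.1 + 1)) *
        (∏ j ∈ range p.1, (1 - X ^ (j + 1) : PowerSeries ℚ))⁻¹ *
        (∏ j ∈ range p.2, (1 - X ^ (3 * (j + 1)) : PowerSeries ℚ))⁻¹)) := by
  have hL : Nat.card {l : List ℕ // l.length = M ∧ (∀ x ∈ l, 0 < x) ∧ l.sum = N ∧
        l.Chain' (fun a b => a + 2 ≤ b ∧ ((a + b) % 3 = 0 ∨ a + 4 ≤ b))}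
      = Nat.card (W (fun _ => True) 0 N M) := by
    apply Nat.card_congr
    apply Equiv.subtypeEquivRight
    intro l
    constructor
    · rintro ⟨h1, h2, h3, h4⟩
      exact ⟨h1, h2, by omega, h4, fun _ _ => trivial⟩
    · rintro ⟨h1, h2, h3, h4, _⟩
      exact ⟨h1, h2, by omega, h4⟩
  rw [hL, (main M N).1, sum1_eq N M, sum2_eq N M, SA, map_add]
end
end
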